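/- arXiv:2603.12462 — 9 statements merged into one kernel-verified Lean document; each statement's English description precedes it below -/
import Mathlib

section
/- For every integer n ≥ 2 and every real number p ∈ (0,1), one has (n-2)·(n^p - (n-1)^p)^{1/(1-p)} + 1 ≤ (n-1)^{p/(1-p)}. -/
theorem stmt0 (n : ℕ) (hn : 2 ≤ n) (p : ℝ) (hp : 0 < p) (hp1 : p < 1) :
    ((n : ℝ) - 2) * ((n : ℝ) ^ p - ((n : ℝ) - 1) ^ p) ^ (1 / (1 - p)) + 1
      ≤ ((n : ℝ) - 1) ^ (p / (1 - p)) := by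
  set x : ℝ := (n : ℝ) - 1 with hxdef
  have hx1 : 1 ≤ x := by
    have : (2 : ℝ) ≤ (n : ℝ) := by exact_mod_cast hn
    simp [hxdef]; linarith
  have hx0 : 0 < x := lt_of_lt_of_le one_pos hx1
  have h1p : 0 < 1 - p := by linarith
  have hq : 0 < p / (1 - p) := div_pos hp h1p
  -- Bernoulli: (x+1)^p ≤ x^p + p * x^(p-1)
  have hn_eq : (n : ℝ) = x + 1 := by simp [hxdef]
  have hbern : (n : ℝ) ^ p - x ^ p ≤ p * x ^ (p - 1) := by
    have h1 : ((1 : ℝ) + 1 / x) ^ p ≤ 1 + p * (1 / x) :=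
      rpow_one_add_le_one_add_mul_self (le_trans (by norm_num : (-1:ℝ) ≤ 0) (by positivity)) hp.le hp1.le
    have h2 : (n : ℝ) ^ p = x ^ p * (1 + 1 / x) ^ p := by
      rw [← Real.mul_rpow hx0.le (by positivity)]
      congr 1
      field_simp
      rw [hn_eq]
    have h3 : x ^ p * (1 + p * (1 / x)) = x ^ p + p * x ^ (p - 1) := by
      rw [Real.rpow_sub hx0, Real.rpow_one]
      field_simp
    have h4 : x ^ p * (1 + 1 / x) ^ p ≤ x ^ p * (1 + p * (1 / x)) :=
      mul_le_mul_of_nonneg_left h1 (Real.rpow_nonneg hx0.le p)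
    rw [h2]; linarith [h3 ▸ h4]
  have hnx : x ≤ (n : ℝ) := by rw [hn_eq]; linarith
  have hdiff0 : 0 ≤ (n : ℝ) ^ p - x ^ p :=
    sub_nonneg.mpr (Real.rpow_le_rpow hx0.le hnx hp.le)
  have hexp : (0 : ℝ) ≤ 1 / (1 - p) := by positivity
  have step1 : ((n : ℝ) ^ p - x ^ p) ^ (1 / (1 - p)) ≤ (p * x ^ (p - 1)) ^ (1 / (1 - p)) :=
    Real.rpow_le_rpow hdiff0 hbern hexp
  have step2 : (p * x ^ (p - 1)) ^ (1 / (1 - p)) = p ^ (1 / (1 - p)) * x⁻¹ := by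
    rw [Real.mul_rpow hp.le (Real.rpow_nonneg hx0.le _),
      ← Real.rpow_mul hx0.le]
    rw [show (p - 1) * (1 / (1 - p)) = -1 by field_simp; ring,
      Real.rpow_neg_one]
  have step3 : p ^ (1 / (1 - p)) ≤ p := by
    calc p ^ (1 / (1 - p)) ≤ p ^ (1 : ℝ) :=
          Real.rpow_le_rpow_of_exponent_ge hp hp1.le ((one_le_div h1p).mpr (by linarith))
      _ = p := Real.rpow_one p
  have hlog : 1 - x⁻¹ ≤ Real.log x := by
    have := Real.log_le_sub_one_of_pos (show (0:ℝ) < x⁻¹ by positivity)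
    rw [Real.log_inv] at this
    linarith
  have hlog0 : 0 ≤ Real.log x := Real.log_nonneg hx1
  have hfin : 1 + (p / (1 - p)) * Real.log x ≤ x ^ (p / (1 - p)) := by
    rw [Real.rpow_def_of_pos hx0, mul_comm (Real.log x)]
    linarith [Real.add_one_le_exp ((p / (1 - p)) * Real.log x)]
  have hpq : p ≤ p / (1 - p) := by
    rw [le_div_iff₀ h1p]; nlinarith
  have hx2 : ((n : ℝ) - 2) = x - 1 := by rw [hxdef]; ring
  rw [hx2]
  have hxm0 : 0 ≤ x - 1 := by linarith
  calc (x - 1) * ((n : ℝ) ^ p - x ^ p) ^ (1 / (1 - p)) + 1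
      ≤ (x - 1) * (p ^ (1 / (1 - p)) * x⁻¹) + 1 := by
        have := mul_le_mul_of_nonneg_left (step2 ▸ step1) hxm0
        linarith
    _ ≤ (x - 1) * (p * x⁻¹) + 1 := by
        have : p ^ (1 / (1 - p)) * x⁻¹ ≤ p * x⁻¹ :=
          mul_le_mul_of_nonneg_right step3 (by positivity)
        nlinarith
    _ = p * (1 - x⁻¹) + 1 := by field_simp
    _ ≤ p * Real.log x + 1 := by nlinarith
    _ ≤ (p / (1 - p)) * Real.log x + 1 := by nlinarith
    _ ≤ x ^ (p / (1 - p)) := by linarith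
end

section
/- For every integer n ≥ 2 and every real number p ∈ (0,1), one has (n^p - (n-1)^p)^{1/(1-p)} + 3^{-p/(1-p)}·((n-2)·n^p - (n-3)·(n-1)^p)^{1/(1-p)} ≤ (n-1)^{p/(1-p)}. -/
theorem stmt1 (n : ℕ) (hn : 2 ≤ n) (p : ℝ) (hp : 0 < p) (hp1 : p < 1) :
    ((n : ℝ) ^ p - ((n : ℝ) - 1) ^ p) ^ (1 / (1 - p))
      + (3 : ℝ) ^ (-p / (1 - p))
        * (((n : ℝ) - 2) * (n : ℝ) ^ p - ((n : ℝ) - 3) * ((n : ℝ) - 1) ^ p) ^ (1 / (1 - p))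
      ≤ ((n : ℝ) - 1) ^ (p / (1 - p)) := by
  have h1p : 0 < 1 - p := by linarith
  have hn2 : (2:ℝ) ≤ (n:ℝ) := by exact_mod_cast hn
  set b : ℝ := (n:ℝ) - 1 with hbdef
  have hb1 : (1:ℝ) ≤ b := by simp only [hbdef]; linarith
  have hb0 : (0:ℝ) < b := by linarith
  have hnb : (n:ℝ) = b + 1 := by simp [hbdef]
  set q : ℝ := 1/(1-p) with hqdef
  set t : ℝ := p/(1-p) with htdef
  have hq : q = t + 1 := by rw [hqdef, htdef, div_add_one h1p.ne']; ring
  have ht0 : 0 < t := div_pos hp h1p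
  have hq0 : 0 < q := by linarith
  set B : ℝ := b ^ p with hBdef
  have hB0 : 0 < B := Real.rpow_pos_of_pos hb0 p
  set A : ℝ := (n:ℝ)^p - B with hAdef
  have hA0 : 0 ≤ A := by
    have : b ^ p ≤ (n:ℝ) ^ p := Real.rpow_le_rpow hb0.le (by linarith) hp.le
    simp [hAdef]; linarith
  -- Bernoulli: n^p ≤ B * (1 + p/b)
  have hbern : (n:ℝ)^p ≤ B * (1 + p * (1/b)) := by
    have h1 : (n:ℝ) = b * (1 + 1/b) := by field_simp; linarith
    have hs : (-1:ℝ) ≤ 1/b := le_trans (by norm_num : (-1:ℝ) ≤ 0) (by positivity)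
    have h2 : ((1:ℝ) + 1/b) ^ p ≤ 1 + p * (1/b) :=
      rpow_one_add_le_one_add_mul_self hs hp.le hp1.le
    calc (n:ℝ)^p = (b * (1 + 1/b)) ^ p := by rw [← h1]
      _ = b ^ p * (1 + 1/b) ^ p := Real.mul_rpow hb0.le (by positivity)
      _ ≤ B * (1 + p * (1/b)) := by
          apply mul_le_mul_of_nonneg_left h2 hB0.le
  have hAle : A ≤ (p/b) * B := by
    have : (p/b) * B = B * (1 + p * (1/b)) - B := by ring
    simp only [hAdef]; rw [this]; linarith
  set C : ℝ := ((n:ℝ)-2) * (n:ℝ)^p - ((n:ℝ)-3) * B with hCdef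
  have hCeq : C = B + (b - 1) * A := by simp only [hCdef, hAdef, hnb]; ring
  have hC0 : 0 < C := by
    rw [hCeq]
    have : 0 ≤ (b - 1) * A := mul_nonneg (by linarith) hA0
    linarith
  have hCle : C ≤ B * (1 + p * (b-1)/b) := by
    rw [hCeq]
    have h1 : (b - 1) * A ≤ (b - 1) * ((p/b) * B) :=
      mul_le_mul_of_nonneg_left hAle (by linarith)
    have h2 : B + (b - 1) * ((p/b) * B) = B * (1 + p * (b-1)/b) := by
      field_simp
    linarith
  set D : ℝ := (3:ℝ)^(-p) * C with hDdef
  have hD0 : 0 < D := mul_pos (Real.rpow_pos_of_pos (by norm_num) _) hC0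
  -- log 3 ≥ 1
  have hlog3 : (1:ℝ) ≤ Real.log 3 := by
    have h1 : Real.exp 1 ≤ 3 := by
      have := Real.exp_one_lt_d9
      linarith
    calc (1:ℝ) = Real.log (Real.exp 1) := (Real.log_exp 1).symm
      _ ≤ Real.log 3 := Real.log_le_log (Real.exp_pos 1) h1
  have h3p : (3:ℝ)^(-p) ≤ Real.exp (-p) := by
    rw [Real.rpow_def_of_pos (by norm_num : (0:ℝ) < 3)]
    apply Real.exp_le_exp.2
    nlinarith
  have hpbt : (p/b)^t ≤ Real.exp (-p) := by
    have hpb0 : 0 < p/b := div_pos hp hb0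
    rw [Real.rpow_def_of_pos hpb0]
    apply Real.exp_le_exp.2
    have hlog : Real.log (p/b) ≤ p/b - 1 := Real.log_le_sub_one_of_pos hpb0
    have hpbp : p/b ≤ p := by
      rw [div_le_iff₀ hb0]; nlinarith
    have hlog' : Real.log (p/b) ≤ p - 1 := by linarith
    have h2 : Real.log (p/b) * t ≤ (p-1) * t := mul_le_mul_of_nonneg_right hlog' ht0.le
    have h3 : (p-1)*t = -p := by rw [htdef]; field_simp; ring
    linarith
  have hexp : Real.exp (-p) * (1 + p) ≤ 1 := by
    have h := Real.add_one_le_exp p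
    have he : 0 < Real.exp p := Real.exp_pos p
    rw [Real.exp_neg]
    rw [inv_mul_le_iff₀ he]
    linarith
  -- core: exp(-p) * (1 + p*(b-1)/b) + (p/b) * exp(-p) ≤ 1
  have hcore : Real.exp (-p) * (1 + p * (b-1)/b) + (p/b) * Real.exp (-p) ≤ 1 := by
    have heq : Real.exp (-p) * (1 + p * (b-1)/b) + (p/b) * Real.exp (-p)
        = Real.exp (-p) * (1 + p) := by field_simp; ring
    rw [heq]; exact hexp
  have hep : 0 < Real.exp (-p) := Real.exp_pos _
  -- D ≤ B
  have h2' : Real.exp (-p) * (1 + p * (b-1)/b) ≤ 1 := by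
    have h3 : 0 ≤ (p/b) * Real.exp (-p) := by positivity
    linarith
  have hD' : D ≤ Real.exp (-p) * (1 + p * (b-1)/b) * B := by
    calc D ≤ Real.exp (-p) * (B * (1 + p * (b-1)/b)) :=
          mul_le_mul h3p hCle hC0.le hep.le
      _ = Real.exp (-p) * (1 + p * (b-1)/b) * B := by ring
  have hDB : D ≤ B := by
    calc D ≤ Real.exp (-p) * (1 + p * (b-1)/b) * B := hD'
      _ ≤ 1 * B := mul_le_mul_of_nonneg_right h2' hB0.le
      _ = B := one_mul B
  -- T2 : A^q ≤ B^t * (B - D)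
  have hAq : A^q ≤ B^t * (B - D) := by
    have h1 : A^q ≤ ((p/b)*B)^q := Real.rpow_le_rpow hA0 hAle hq0.le
    have h2 : ((p/b)*B)^q = (p/b)^q * B^q := Real.mul_rpow (by positivity) hB0.le
    have h3 : (p/b)^q = (p/b)^t * (p/b) := by
      rw [hq, Real.rpow_add (div_pos hp hb0), Real.rpow_one]
    have h4 : B^q = B^t * B := by
      rw [hq, Real.rpow_add hB0, Real.rpow_one]
    have hBt0 : 0 < B^t := Real.rpow_pos_of_pos hB0 t
    -- (p/b)^t * (p/b) * B ≤ B - D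
    have h5 : (p/b)^t * (p/b) * B ≤ B - D := by
      have hpb0 : (0:ℝ) ≤ p/b := (div_pos hp hb0).le
      have h6 : (p/b)^t * (p/b) * B ≤ Real.exp (-p) * (p/b) * B :=
        mul_le_mul_of_nonneg_right
          (mul_le_mul_of_nonneg_right hpbt hpb0) hB0.le
      have h7 : Real.exp (-p) * (p/b) * B + Real.exp (-p) * (1 + p * (b-1)/b) * B ≤ B := by
        have h := mul_le_mul_of_nonneg_right hcore hB0.le
        have he : (Real.exp (-p) * (1 + p * (b-1)/b) + (p/b) * Real.exp (-p)) * B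
            = Real.exp (-p) * (p/b) * B + Real.exp (-p) * (1 + p * (b-1)/b) * B := by ring
        rw [he, one_mul] at h
        exact h
      linarith
    calc A^q ≤ ((p/b)*B)^q := h1
      _ = (p/b)^t * (p/b) * B^t * B := by rw [h2, h3, h4]; ring
      _ = ((p/b)^t * (p/b) * B) * B^t := by ring
      _ ≤ (B - D) * B^t := mul_le_mul_of_nonneg_right h5 hBt0.le
      _ = B^t * (B - D) := by ring
  -- D^q ≤ B^t * D
  have hDq : D^q ≤ B^t * D := by
    have h1 : D^q = D^t * D := by
      rw [hq, Real.rpow_add hD0, Real.rpow_one]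
    have h2 : D^t ≤ B^t := Real.rpow_le_rpow hD0.le hDB ht0.le
    rw [h1]
    exact mul_le_mul_of_nonneg_right h2 hD0.le
  -- assemble
  have hmain : A^q + D^q ≤ B^q := by
    have h4 : B^q = B^t * B := by
      rw [hq, Real.rpow_add hB0, Real.rpow_one]
    have : B^t * (B - D) + B^t * D = B^t * B := by ring
    linarith
  -- rewrite goal
  have e1 : b ^ (p/(1-p)) = B^q := by
    rw [hBdef, ← Real.rpow_mul hb0.le]
    congr 1
    rw [hqdef]; ring
  have e2 : (3:ℝ) ^ (-p / (1-p)) * C^q = D^q := by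
    rw [hDdef, Real.mul_rpow (by positivity : (0:ℝ) ≤ (3:ℝ)^(-p)) hC0.le]
    congr 1
    rw [← Real.rpow_mul (by norm_num : (0:ℝ) ≤ 3)]
    congr 1
    rw [hqdef]; ring
  calc A ^ q + (3:ℝ) ^ (-p / (1-p)) * C ^ q = A^q + D^q := by rw [e2]
    _ ≤ B^q := hmain
    _ = b ^ (p/(1-p)) := e1.symm
end

section
/- For every real p ∈ (0,1) the function F_p(x) = (x-1)^{1/(1-p)} - p^{1/(1-p)}·(x-2) - x + 1 is nonnegative on [2,∞). -/
theorem stmt3 (p : ℝ) (hp : 0 < p) (hp1 : p < 1) (x : ℝ) (hx : 2 ≤ x) :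
    0 ≤ (x - 1) ^ (1 / (1 - p)) - p ^ (1 / (1 - p)) * (x - 2) - x + 1 := by
  set q : ℝ := 1 / (1 - p) with hq
  have h1p : 0 < 1 - p := by linarith
  have hq1 : 1 ≤ q := by
    rw [hq, le_div_iff₀ h1p]; linarith
  -- Bernoulli
  have hbern : 1 + q * (x - 2) ≤ (1 + (x - 2)) ^ q := by
    apply one_add_mul_self_le_rpow_one_add (by linarith) hq1
  have hx1 : (1 : ℝ) + (x - 2) = x - 1 := by ring
  rw [hx1] at hbern
  -- p^q ≤ p
  have hpq : p ^ q ≤ p := by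
    calc p ^ q ≤ p ^ (1 : ℝ) := Real.rpow_le_rpow_of_exponent_ge hp hp1.le hq1
    _ = p := Real.rpow_one p
  -- p ≤ q - 1
  have hq2 : p ≤ q - 1 := by
    rw [hq, le_sub_iff_add_le, le_div_iff₀ h1p]
    nlinarith
  nlinarith [hbern, hpq, hq2, mul_nonneg (sub_nonneg.2 hpq) (by linarith : (0:ℝ) ≤ x - 2)]
end

section
/- For every real p ∈ (0,1) the function G_p(x) = (x-1)^{1/(1-p)} - ((p·x + x - 2p - 1)/3^p)^{1/(1-p)} - p^{1/(1-p)} is nonnegative on [2,∞). -/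
open Real Set

theorem stmt6 (p : ℝ) (hp : 0 < p) (hp1 : p < 1) (x : ℝ) (hx : 2 ≤ x) :
    0 ≤ (x - 1) ^ (1 / (1 - p))
        - ((p * x + x - 2 * p - 1) / 3 ^ p) ^ (1 / (1 - p))
        - p ^ (1 / (1 - p)) := by
  have h1p : 0 < 1 - p := by linarith
  set q : ℝ := 1 / (1 - p) with hqdef
  have hq1 : 1 ≤ q := by
    rw [hqdef, le_div_iff₀ h1p]; linarith
  have hq0 : 0 < q := lt_of_lt_of_le one_pos hq1
  have h3 : (0:ℝ) < 3 := by norm_num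
  have h3p : 0 < (3:ℝ) ^ p := Real.rpow_pos_of_pos h3 p
  have hlog3 : 1 < Real.log 3 := by
    rw [show (1:ℝ) = Real.log (Real.exp 1) from (Real.log_exp 1).symm]
    exact Real.log_lt_log (Real.exp_pos 1) (by linarith [Real.exp_one_lt_d9])
  have hc1 : 1 + p < (3:ℝ) ^ p := by
    rw [Real.rpow_def_of_pos h3]
    have h0 : Real.log 3 * p ≠ 0 := by positivity
    have := Real.add_one_lt_exp h0
    nlinarith
  set g : ℝ → ℝ := fun y => (y - 1) ^ q - ((p * y + y - 2 * p - 1) / (3:ℝ) ^ p) ^ q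
    with hgdef
  -- the constant c = (1+p)/3^p < 1
  set c : ℝ := (p + 1) / (3:ℝ) ^ p with hcdef
  have hc0 : 0 < c := by positivity
  have hclt1 : c < 1 := by
    rw [hcdef, div_lt_one h3p]; linarith
  -- monotonicity
  have hmono : StrictMonoOn g (Set.Ici (2:ℝ)) := by
    apply strictMonoOn_of_deriv_pos (convex_Ici 2)
    · apply ContinuousOn.sub
      · apply ContinuousOn.rpow_const (by fun_prop)
        intro y hy; right; exact hq0.le
      · apply ContinuousOn.rpow_const (by fun_prop)
        intro y hy; right; exact hq0.le
    · intro y hy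
      rw [interior_Ici] at hy
      have hy2 : (2:ℝ) < y := hy
      have hy1 : (0:ℝ) < y - 1 := by linarith
      have hupos : 0 < p * y + y - 2 * p - 1 := by nlinarith
      set u : ℝ := (p * y + y - 2 * p - 1) / (3:ℝ) ^ p with hudef
      have hu0 : 0 < u := by positivity
      have hA : HasDerivAt (fun z => (z - 1) ^ q) (1 * q * (y - 1) ^ (q - 1)) y :=
        ((hasDerivAt_id y).sub_const 1).rpow_const (Or.inr hq1)
      have hlin : HasDerivAt (fun z => (p * z + z - 2 * p - 1) / (3:ℝ) ^ p)
          ((p + 1) / (3:ℝ) ^ p) y := by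
        have heq : (fun z => (p * z + z - 2 * p - 1) / (3:ℝ) ^ p)
            = (fun z => ((p + 1) * z - (2 * p + 1)) / (3:ℝ) ^ p) := by
          funext z; ring
        rw [heq]
        have h1 : HasDerivAt (fun z => (p + 1) * z - (2 * p + 1)) (p + 1) y := by
          simpa using ((hasDerivAt_id y).const_mul (p + 1)).sub_const (2 * p + 1)
        simpa using h1.div_const ((3:ℝ) ^ p)
      have hB : HasDerivAt (fun z => ((p * z + z - 2 * p - 1) / (3:ℝ) ^ p) ^ q)
          ((p + 1) / (3:ℝ) ^ p * q * u ^ (q - 1)) y :=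
        hlin.rpow_const (Or.inr hq1)
      have hg' : HasDerivAt g
          (1 * q * (y - 1) ^ (q - 1) - (p + 1) / (3:ℝ) ^ p * q * u ^ (q - 1)) y :=
        hA.sub hB
      rw [hg'.deriv]
      -- key inequality
      have key : c * u ^ (q - 1) < (y - 1) ^ (q - 1) := by
        have hle : u ≤ c * (y - 1) := by
          rw [hudef, hcdef, div_mul_eq_mul_div, div_le_div_iff₀ h3p h3p]
          nlinarith
        have h1 : u ^ (q - 1) ≤ (c * (y - 1)) ^ (q - 1) :=
          Real.rpow_le_rpow hu0.le hle (by linarith)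
        have h2 : (c * (y - 1)) ^ (q - 1) = c ^ (q - 1) * (y - 1) ^ (q - 1) :=
          Real.mul_rpow hc0.le hy1.le
        have h3' : c * (c ^ (q - 1) * (y - 1) ^ (q - 1))
            = c ^ q * (y - 1) ^ (q - 1) := by
          rw [show (q : ℝ) = 1 + (q - 1) by ring, Real.rpow_add hc0,
            Real.rpow_one]
          ring
        have h4 : c ^ q < 1 := Real.rpow_lt_one hc0.le hclt1 hq0
        have h5 : 0 < (y - 1) ^ (q - 1) := Real.rpow_pos_of_pos hy1 _
        calc c * u ^ (q - 1) ≤ c * ((c * (y - 1)) ^ (q - 1)) :=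
              mul_le_mul_of_nonneg_left h1 hc0.le
          _ = c ^ q * (y - 1) ^ (q - 1) := by rw [h2]; exact h3'
          _ < 1 * (y - 1) ^ (q - 1) := by nlinarith
          _ = (y - 1) ^ (q - 1) := one_mul _
      have : (p + 1) / (3:ℝ) ^ p * q * u ^ (q - 1) = q * (c * u ^ (q - 1)) := by
        rw [hcdef]; ring
      rw [this, one_mul]
      nlinarith [Real.rpow_pos_of_pos hy1 (q - 1)]
  -- value at 2
  have hg2 : p ≤ g 2 := by
    have hval : g 2 = 1 - ((3:ℝ) ^ p)⁻¹ ^ q := by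
      show ((2:ℝ) - 1) ^ q - ((p * 2 + 2 - 2 * p - 1) / (3:ℝ) ^ p) ^ q = _
      rw [show ((2:ℝ) - 1) = 1 by norm_num, show p * 2 + 2 - 2 * p - 1 = (1:ℝ) by ring,
        Real.one_rpow, one_div]
    have hinv : ((3:ℝ) ^ p)⁻¹ ^ q = (3:ℝ) ^ (-(p * q)) := by
      rw [← Real.rpow_neg h3.le, ← Real.rpow_mul h3.le, neg_mul]
    have hpq0 : 0 ≤ p * q := by positivity
    have hexp : 1 / (1 - p) ≤ Real.exp (p * q) := by
      have h1 : p * q + 1 ≤ Real.exp (p * q) := Real.add_one_le_exp _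
      have h2 : p * q + 1 = 1 / (1 - p) := by
        rw [hqdef]; field_simp; ring
      linarith
    have h3u : Real.exp (p * q) ≤ (3:ℝ) ^ (p * q) := by
      rw [Real.rpow_def_of_pos h3]
      exact Real.exp_le_exp.2 (by nlinarith)
    have hbound : (3:ℝ) ^ (-(p * q)) ≤ 1 - p := by
      rw [Real.rpow_neg h3.le]
      have hpos : 0 < (3:ℝ) ^ (p * q) := Real.rpow_pos_of_pos h3 _
      have h1 : 1 / (1 - p) ≤ (3:ℝ) ^ (p * q) := hexp.trans h3u
      rw [inv_le_comm₀ hpos h1p] -- maybe wrong lemma; fallback below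
      · calc (1 - p)⁻¹ = 1 / (1 - p) := (one_div _).symm
          _ ≤ (3:ℝ) ^ (p * q) := h1
    rw [hval, hinv]
    linarith
  have hgx : g 2 ≤ g x := by
    rcases eq_or_lt_of_le hx with h | h
    · rw [h]
    · exact (hmono (by simp) (by simpa using hx) h).le
  have hpq : p ^ q ≤ p := by
    have := Real.rpow_le_rpow_of_exponent_ge hp hp1.le hq1
    simpa using this
  have hfin : 0 ≤ g x - p ^ q := by linarith
  simpa [hgdef] using hfin
end

section
/- Let 2 ≤ r < n be integers, p ∈ (0,1), and let u ≥ 0, x_{r+1},…,x_n ≥ 0 and y_1,…,y_{r-1} ≥ u be real numbers satisfying Σ_{i=r+1}^n x_i + n·u = Σ_{i=1}^{r-1} y_i. Then Σ_{i=r+1}^n x_i^p + (r-1)·u^p ≤ (1 - 1/n)^p · (Σ_{i=r+1}^n x_i^p + Σ_{i=1}^{r-1} y_i^p). -/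
open Finset

lemma jensen2 {p γ α β : ℝ} (hp : 0 < p) (hp1 : p < 1) (hγ : 0 < γ) (hγ1 : γ < 1)
    (hα : 0 ≤ α) (hβ : 0 ≤ β) :
    γ ^ (1 - p) * α ^ p + (1 - γ) ^ (1 - p) * β ^ p ≤ (α + β) ^ p := by
  have hγ1' : (0:ℝ) < 1 - γ := by linarith
  have h := (Real.concaveOn_rpow hp.le hp1.le).2 (Set.mem_Ici.2 (div_nonneg hα hγ.le))
    (Set.mem_Ici.2 (div_nonneg hβ hγ1'.le)) hγ.le hγ1'.le (by ring)
  simp only [smul_eq_mul] at h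
  rw [mul_div_cancel₀ _ (ne_of_gt hγ), mul_div_cancel₀ _ (ne_of_gt hγ1')] at h
  calc γ ^ (1 - p) * α ^ p + (1 - γ) ^ (1 - p) * β ^ p
      = γ * (α / γ) ^ p + (1 - γ) * (β / (1 - γ)) ^ p := by
        rw [Real.div_rpow hα hγ.le, Real.div_rpow hβ hγ1'.le,
          Real.rpow_sub hγ, Real.rpow_sub hγ1', Real.rpow_one]
        field_simp
        rw [Real.rpow_one]
    _ ≤ (α + β) ^ p := h

lemma chord {p a b t : ℝ} (hp : 0 < p) (hp1 : p < 1) (ha : 0 ≤ a) (hat : a ≤ t)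
    (htb : t ≤ b) (hab : a < b) :
    (b - t) * a ^ p + (t - a) * b ^ p ≤ (b - a) * t ^ p := by
  have hb : 0 ≤ b := le_trans ha (le_trans hat htb)
  have hba : (0:ℝ) < b - a := by linarith
  set s := (b - t) / (b - a) with hs
  have hs0 : 0 ≤ s := div_nonneg (by linarith) hba.le
  have hs1 : 0 ≤ 1 - s := by
    have : s ≤ 1 := (div_le_one hba).2 (by linarith)
    linarith
  have h := (Real.concaveOn_rpow hp.le hp1.le).2 (Set.mem_Ici.2 ha)
    (Set.mem_Ici.2 hb) hs0 hs1 (by ring)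
  simp only [smul_eq_mul] at h
  have hst : s * a + (1 - s) * b = t := by
    rw [hs]
    field_simp [hs]
    ring
  rw [hst] at h
  have h2 := mul_le_mul_of_nonneg_left h hba.le
  calc (b - t) * a ^ p + (t - a) * b ^ p
      = (b - a) * (s * a ^ p + (1 - s) * b ^ p) := by
        rw [hs]
        field_simp [hs]
        ring
    _ ≤ (b - a) * t ^ p := h2

lemma power_mean (s : Finset ℕ) (f : ℕ → ℝ) (hf : ∀ i ∈ s, 0 ≤ f i) {p : ℝ}
    (hp : 0 < p) (hp1 : p < 1) :
    ∑ i ∈ s, f i ^ p ≤ (s.card : ℝ) ^ (1 - p) * (∑ i ∈ s, f i) ^ p := by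
  rcases s.eq_empty_or_nonempty with rfl | hs
  · simp [Real.zero_rpow (ne_of_gt hp)]
  have hN : (0:ℝ) < (s.card : ℝ) := by exact_mod_cast Finset.card_pos.2 hs
  have hq : (1:ℝ) ≤ 1 / p := (le_div_iff₀ hp).2 (by linarith)
  have h := Real.rpow_arith_mean_le_arith_mean_rpow s (fun _ => (s.card : ℝ)⁻¹)
    (fun i => f i ^ p) (fun i _ => by positivity) (by
      rw [Finset.sum_const, nsmul_eq_mul, mul_inv_cancel₀ (ne_of_gt hN)])
    (fun i hi => Real.rpow_nonneg (hf i hi) p) hq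
  have hsimp : ∑ i ∈ s, (s.card : ℝ)⁻¹ * (f i ^ p) ^ (1 / p)
      = (s.card : ℝ)⁻¹ * ∑ i ∈ s, f i := by
    rw [← Finset.mul_sum]
    congr 1
    refine Finset.sum_congr rfl fun i hi => ?_
    rw [← Real.rpow_mul (hf i hi), mul_one_div, div_self (ne_of_gt hp), Real.rpow_one]
  rw [hsimp] at h
  have hXnn : (0:ℝ) ≤ ∑ i ∈ s, (s.card : ℝ)⁻¹ * f i ^ p :=
    Finset.sum_nonneg fun i hi => mul_nonneg (by positivity) (Real.rpow_nonneg (hf i hi) p)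
  have h2 := Real.rpow_le_rpow (Real.rpow_nonneg hXnn _) h hp.le
  rw [← Real.rpow_mul hXnn, one_div, inv_mul_cancel₀ (ne_of_gt hp), Real.rpow_one] at h2
  have hA : (0:ℝ) ≤ ∑ i ∈ s, f i := Finset.sum_nonneg hf
  have h3 : ∑ i ∈ s, (s.card : ℝ)⁻¹ * f i ^ p = (s.card : ℝ)⁻¹ * ∑ i ∈ s, f i ^ p := by
    rw [Finset.mul_sum]
  rw [h3] at h2
  have h4 : ((s.card : ℝ)⁻¹ * ∑ i ∈ s, f i) ^ p = ((s.card:ℝ)⁻¹)^p * (∑ i ∈ s, f i)^p :=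
    Real.mul_rpow (by positivity) hA
  rw [h4] at h2
  have h5 := mul_le_mul_of_nonneg_left h2 hN.le
  rw [← mul_assoc, mul_inv_cancel₀ (ne_of_gt hN), one_mul, ← mul_assoc] at h5
  refine h5.trans (le_of_eq ?_)
  congr 1
  rw [Real.inv_rpow hN.le, Real.rpow_sub hN, Real.rpow_one]
  field_simp

set_option maxHeartbeats 2000000 in
theorem stmt10 (n r : ℕ) (hr : 2 ≤ r) (hrn : r < n) (p : ℝ) (hp : 0 < p) (hp1 : p < 1)
    (u : ℝ) (hu : 0 ≤ u) (x y : ℕ → ℝ)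
    (hx : ∀ i ∈ Icc (r + 1) n, 0 ≤ x i)
    (hy : ∀ i ∈ Icc 1 (r - 1), u ≤ y i)
    (hsum : ∑ i ∈ Icc (r + 1) n, x i + n * u = ∑ i ∈ Icc 1 (r - 1), y i) :
    ∑ i ∈ Icc (r + 1) n, x i ^ p + ((r : ℝ) - 1) * u ^ p
      ≤ (1 - 1 / (n : ℝ)) ^ p
        * (∑ i ∈ Icc (r + 1) n, x i ^ p + ∑ i ∈ Icc 1 (r - 1), y i ^ p) := by
  classical
  set s1 := Icc (r+1) n with hs1
  set s2 := Icc 1 (r-1) with hs2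
  set A := ∑ i ∈ s1, x i with hAdef
  set Y := ∑ i ∈ s2, y i with hYdef
  set S := ∑ i ∈ s1, x i ^ p with hSdef
  set T := ∑ i ∈ s2, y i ^ p with hTdef
  clear_value A Y S T
  have hn3 : 3 ≤ n := by omega
  have hen : (3:ℝ) ≤ (n:ℝ) := by exact_mod_cast hn3
  have her : (2:ℝ) ≤ (r:ℝ) := by exact_mod_cast hr
  have hern : (r:ℝ) + 1 ≤ (n:ℝ) := by exact_mod_cast hrn
  have hA0 : 0 ≤ A := by rw [hAdef]; exact Finset.sum_nonneg hx
  have hS0 : 0 ≤ S := by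
    rw [hSdef]; exact Finset.sum_nonneg (fun i hi => Real.rpow_nonneg (hx i hi) p)
  have hup : 0 ≤ u ^ p := Real.rpow_nonneg hu p
  set em := (n:ℝ) - r + 2 with hemdef
  have hem3 : (3:ℝ) ≤ em := by rw [hemdef]; linarith
  set M := A + em * u with hMdef
  clear_value em M
  have hYM : Y = M + ((r:ℝ) - 2) * u := by
    rw [hMdef, hemdef]; linarith [hsum]
  have hcard1 : s1.card = n - r := by rw [hs1, Nat.card_Icc]; omega
  have hcard2 : s2.card = r - 1 := by rw [hs2, Nat.card_Icc]; omega
  have hcast1 : ((n - r : ℕ):ℝ) = (n:ℝ) - r := by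
    rw [Nat.cast_sub hrn.le]
  have hcast2 : ((r - 1 : ℕ):ℝ) = (r:ℝ) - 1 := by
    rw [Nat.cast_sub (by omega : 1 ≤ r)]; norm_num
  by_cases hdeg : u < M
  case neg =>
    push_neg at hdeg
    rw [hMdef] at hdeg
    have h2 : u*(em-1) ≤ 0 := by linarith
    have h3 : 0 ≤ u*(em-1) := mul_nonneg hu (by linarith)
    have hu0 : u = 0 := by
      rcases mul_eq_zero.1 (le_antisymm h2 h3) with h | h
      · exact h
      · linarith
    have hA0' : A = 0 := by
      rw [hu0] at hdeg; linarith
    have hsum01 : ∑ i ∈ s1, x i = 0 := by rw [← hAdef]; exact hA0'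
    have hxz : ∀ i ∈ s1, x i = 0 := (Finset.sum_eq_zero_iff_of_nonneg hx).1 hsum01
    have hSz : S = 0 := by
      rw [hSdef]
      exact Finset.sum_eq_zero fun i hi => by rw [hxz i hi, Real.zero_rpow hp.ne']
    have hYz : Y = 0 := by rw [← hsum, hA0', hu0]; ring
    have hyz : ∀ i ∈ s2, y i = 0 := by
      intro i hi
      have hsum02 : ∑ i ∈ s2, y i = 0 := by rw [← hYdef]; exact hYz
      have hy0 : ∀ i ∈ s2, 0 ≤ y i := fun i hi => le_trans (le_of_eq hu0.symm) (hy i hi)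
      exact (Finset.sum_eq_zero_iff_of_nonneg hy0).1 hsum02 i hi
    have hTz : T = 0 := by
      rw [hTdef]
      exact Finset.sum_eq_zero fun i hi => by rw [hyz i hi, Real.zero_rpow hp.ne']
    rw [hSz, hTz, hu0, Real.zero_rpow hp.ne']
    norm_num
  case pos =>
  have hM0 : 0 < M := lt_of_le_of_lt hu hdeg
  have hen0 : (n:ℝ) ≠ 0 := by positivity
  set lam := 1 - 1/(n:ℝ) with hlamdef
  clear_value lam
  have hlamen : lam = ((n:ℝ)-1)/(n:ℝ) := by rw [hlamdef]; field_simp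
  have hlam23 : (2/3:ℝ) ≤ lam := by
    rw [hlamdef]
    have := one_div_le_one_div_of_le (show (0:ℝ) < 3 by norm_num) hen
    linarith
  have hlam0 : 0 < lam := by linarith
  have hlam1 : lam < 1 := by
    rw [hlamdef]
    have : 0 < 1/(n:ℝ) := by positivity
    linarith
  set c := lam ^ p with hcdef
  clear_value c
  have hc0 : 0 < c := by rw [hcdef]; exact Real.rpow_pos_of_pos hlam0 p
  have hc1 : c < 1 := by rw [hcdef]; exact Real.rpow_lt_one hlam0.le hlam1 hp
  have hclam : lam ≤ c := by
    rw [hcdef]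
    calc lam = lam ^ (1:ℝ) := (Real.rpow_one lam).symm
    _ ≤ lam ^ p := Real.rpow_le_rpow_of_exponent_ge hlam0 hlam1.le hp1.le
  have hinvlam : lam⁻¹ = (n:ℝ)/((n:ℝ)-1) := by rw [hlamen, inv_div]
  set θ := -Real.log lam with hθdef
  clear_value θ
  have hθeq : θ = Real.log ((n:ℝ)/((n:ℝ)-1)) := by
    rw [hθdef, ← Real.log_inv, hinvlam]
  have hθ0 : 0 < θ := by
    rw [hθdef]; linarith [Real.log_neg hlam0 hlam1]
  have hθle : θ ≤ 1/((n:ℝ)-1) := by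
    rw [hθeq]
    have hpos : (0:ℝ) < (n:ℝ)/((n:ℝ)-1) := by
      apply div_pos <;> linarith
    have h1 := Real.log_le_sub_one_of_pos hpos
    have hne : ((n:ℝ)-1) ≠ 0 := by linarith
    have heq : (n:ℝ)/((n:ℝ)-1) - 1 = 1/((n:ℝ)-1) := by
      field_simp
      ring
    linarith
  have hcexp : c = Real.exp (-(p*θ)) := by
    rw [hcdef, Real.rpow_def_of_pos hlam0, hθdef]; ring_nf
  have h1c : 1 - c ≤ p*θ := by
    rw [hcexp]
    have := Real.add_one_le_exp (-(p*θ))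
    linarith
  have hcinv0 : 0 < c⁻¹ := inv_pos.2 hc0
  set w := c⁻¹ - 1 with hwdef
  clear_value w
  have hw0 : 0 < w := by
    rw [hwdef]
    have hci : 1 < c⁻¹ := (one_lt_inv₀ hc0).2 hc1
    linarith
  have hwc : w * c = 1 - c := by
    rw [hwdef, sub_mul, inv_mul_cancel₀ hc0.ne', one_mul]
  have hwle1 : w ≤ p*θ*c⁻¹ := by
    rw [← div_eq_mul_inv, le_div_iff₀ hc0, hwc]; exact h1c
  have hcinvlam : c⁻¹ ≤ lam⁻¹ := by
    rw [← one_div, ← one_div]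
    exact one_div_le_one_div_of_le hlam0 hclam
  have hwle2 : w ≤ 1/((n:ℝ)-1) := by
    have hne : ((n:ℝ)-1) ≠ 0 := by linarith
    have h9 : lam⁻¹ - 1 = 1/((n:ℝ)-1) := by
      rw [hinvlam]; field_simp; ring
    rw [hwdef]; linarith
  have hw1 : w < 1 := by
    have : 1/((n:ℝ)-1) ≤ 1/2 := one_div_le_one_div_of_le (by norm_num) (by linarith)
    linarith
  have hp1' : (0:ℝ) < 1 - p := by linarith
  set W := w ^ (p/(1-p)) with hWdef
  clear_value W
  have hW0 : 0 < W := by rw [hWdef]; exact Real.rpow_pos_of_pos hw0 _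
  have hW1 : W ≤ 1 := by rw [hWdef]; exact Real.rpow_le_one hw0.le hw1.le (by positivity)
  set γ := ((n:ℝ) - r) * (w * W) with hγdef
  clear_value γ
  have hnr1 : (1:ℝ) ≤ (n:ℝ) - r := by linarith
  have hγ0 : 0 < γ := by rw [hγdef]; exact mul_pos (by linarith) (mul_pos hw0 hW0)
  have hθc : θ * c⁻¹ ≤ (1/((n:ℝ)-1)) * ((n:ℝ)/((n:ℝ)-1)) := by
    apply mul_le_mul hθle (hinvlam ▸ hcinvlam) hcinv0.le (by
      have h99 : (0:ℝ) < (n:ℝ)-1 := by linarith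
      positivity)
  have hγpW : γ ≤ p * W := by
    have h1 : ((n:ℝ)-r) * w ≤ p := by
      have h2 : ((n:ℝ)-r)*w ≤ ((n:ℝ)-2) * (p*θ*c⁻¹) :=
        mul_le_mul (by linarith) hwle1 hw0.le (by linarith)
      have h3 : ((n:ℝ)-2) * (p*θ*c⁻¹) ≤ ((n:ℝ)-2) * (p * ((1/((n:ℝ)-1)) * ((n:ℝ)/((n:ℝ)-1)))) := by
        apply mul_le_mul_of_nonneg_left _ (by linarith)
        calc p*θ*c⁻¹ = p * (θ*c⁻¹) := by ring
        _ ≤ p * ((1/((n:ℝ)-1)) * ((n:ℝ)/((n:ℝ)-1))) := mul_le_mul_of_nonneg_left hθc hp.le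
      have h4 : ((n:ℝ)-2) * (p * ((1/((n:ℝ)-1)) * ((n:ℝ)/((n:ℝ)-1)))) ≤ p := by
        have hd0 : (0:ℝ) < ((n:ℝ)-1)*((n:ℝ)-1) := mul_pos (by linarith) (by linarith)
        have h5 : (((n:ℝ)-2) * (n:ℝ)) / (((n:ℝ)-1)*((n:ℝ)-1)) ≤ 1 := by
          rw [div_le_one hd0]
          have h6 : ((n:ℝ)-1)*((n:ℝ)-1) - ((n:ℝ)-2)*(n:ℝ) = 1 := by ring
          linarith
        have h7 := mul_le_mul_of_nonneg_left h5 hp.le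
        rw [mul_one] at h7
        have h8 : ((n:ℝ)-2) * (p * ((1/((n:ℝ)-1)) * ((n:ℝ)/((n:ℝ)-1))))
            = p * ((((n:ℝ)-2) * (n:ℝ)) / (((n:ℝ)-1)*((n:ℝ)-1))) := by
          field_simp
        rw [h8]
        exact h7
      linarith
    calc γ = (((n:ℝ)-r)*w)*W := by rw [hγdef]; ring
    _ ≤ p*W := mul_le_mul_of_nonneg_right h1 hW0.le
  have hγp : γ < 1 := by
    have h9 : p*W ≤ p := by
      have := mul_le_mul_of_nonneg_left hW1 hp.le
      rwa [mul_one] at this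
    linarith
  have hγ1 : 0 < 1 - γ := by linarith
  -- core log fact
  have hcorelog : ((n:ℝ)/((n:ℝ)-1)) * Real.log ((n:ℝ)/((n:ℝ)-1)) ≤ Real.log ((n:ℝ)-1) := by
    rcases eq_or_lt_of_le hn3 with h3 | h4
    · have hn3' : (n:ℝ) = 3 := by exact_mod_cast h3.symm
      rw [hn3']
      norm_num
      have h1 : Real.log ((3/2:ℝ)^(3:ℕ)) ≤ Real.log ((2:ℝ)^(2:ℕ)) :=
        Real.log_le_log (by positivity) (by norm_num)
      rw [Real.log_pow, Real.log_pow] at h1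
      push_cast at h1
      linarith
    · have hen4 : (4:ℝ) ≤ (n:ℝ) := by exact_mod_cast h4
      have h1 : (0:ℝ) < (n:ℝ) - 1 := by linarith
      have hpos : (0:ℝ) < (n:ℝ)/((n:ℝ)-1) := by positivity
      have hlog : Real.log ((n:ℝ)/((n:ℝ)-1)) ≤ 1/((n:ℝ)-1) := by
        have := Real.log_le_sub_one_of_pos hpos
        have hne : ((n:ℝ)-1) ≠ 0 := by linarith
        have heq : (n:ℝ)/((n:ℝ)-1) - 1 = 1/((n:ℝ)-1) := by field_simp; ring
        linarith
      have h2 : ((n:ℝ)/((n:ℝ)-1)) * Real.log ((n:ℝ)/((n:ℝ)-1)) ≤ ((n:ℝ)/((n:ℝ)-1)) * (1/((n:ℝ)-1)) :=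
        mul_le_mul_of_nonneg_left hlog (by positivity)
      have h3 : ((n:ℝ)/((n:ℝ)-1)) * (1/((n:ℝ)-1)) ≤ 1 := by
        rw [div_mul_div_comm, mul_one, div_le_one (by positivity)]
        have h31 : 4*(n:ℝ) ≤ (n:ℝ)*(n:ℝ) := mul_le_mul_of_nonneg_right hen4 (by linarith)
        have h32 : ((n:ℝ)-1)*((n:ℝ)-1) = (n:ℝ)*(n:ℝ) - 2*(n:ℝ) + 1 := by ring
        linarith
      have h4' : (1:ℝ) ≤ Real.log ((n:ℝ) - 1) := by
        have he3 : Real.exp 1 ≤ 3 := by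
          have := Real.exp_one_lt_d9
          linarith
        rw [Real.le_log_iff_exp_le (by linarith)]
        linarith
      linarith
  have hn1θ : ((n:ℝ)-1)*θ ≤ 1 := by
    have := mul_le_mul_of_nonneg_left hθle (show (0:ℝ) ≤ (n:ℝ)-1 by linarith)
    have heq : ((n:ℝ)-1) * (1/((n:ℝ)-1)) = 1 := by
      rw [mul_one_div, div_self (by linarith : ((n:ℝ)-1) ≠ 0)]
    linarith
  have hlogem : 1 ≤ Real.log em := by
    have he3 : Real.exp 1 ≤ 3 := by
      have := Real.exp_one_lt_d9
      linarith
    rw [Real.le_log_iff_exp_le (by linarith)]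
    linarith
  -- F9 : key bound
  have hK : (1-p) * W * c⁻¹ + γ ≤ 1 := by
    have hWE : W * ((1-p) * c⁻¹ + p) ≤ 1 := by
      have hwlam : w ≤ p*θ*lam⁻¹ := by
        refine hwle1.trans ?_
        have := mul_le_mul_of_nonneg_left hcinvlam (mul_nonneg hp.le hθ0.le)
        calc p*θ*c⁻¹ = p*θ * c⁻¹ := rfl
        _ ≤ p*θ * lam⁻¹ := mul_le_mul_of_nonneg_left hcinvlam (by positivity)
      have hEexp : (1-p)*c⁻¹ + p ≤ Real.exp ((1-p)*(p*θ*lam⁻¹)) := by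
        have h1 : (1-p)*c⁻¹ + p = 1 + (1-p)*w := by rw [hwdef]; ring
        have h2 : 1 + (1-p)*w ≤ 1 + (1-p)*(p*θ*lam⁻¹) := by
          have := mul_le_mul_of_nonneg_left hwlam (show (0:ℝ) ≤ 1-p by linarith)
          linarith
        have h3 := Real.add_one_le_exp ((1-p)*(p*θ*lam⁻¹))
        linarith
      have hWexp : W ≤ Real.exp (-(p/(1-p) * Real.log ((n:ℝ)-1))) := by
        rw [hWdef, Real.rpow_def_of_pos hw0]
        apply Real.exp_le_exp.2
        have hlw : Real.log w ≤ -Real.log ((n:ℝ)-1) := by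
          have h1 := Real.log_le_log hw0 hwle2
          rwa [one_div, Real.log_inv] at h1
        have := mul_le_mul_of_nonneg_left hlw (show (0:ℝ) ≤ p/(1-p) by positivity)
        linarith
      calc W * ((1-p)*c⁻¹+p)
          ≤ Real.exp (-(p/(1-p) * Real.log ((n:ℝ)-1))) * Real.exp ((1-p)*(p*θ*lam⁻¹)) := by
            apply mul_le_mul hWexp hEexp (by positivity) (Real.exp_pos _).le
      _ = Real.exp ((1-p)*(p*θ*lam⁻¹) - p/(1-p) * Real.log ((n:ℝ)-1)) := by
            rw [← Real.exp_add]; ring_nf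
      _ ≤ 1 := by
            rw [Real.exp_le_one_iff]
            have hcore : θ * lam⁻¹ ≤ Real.log ((n:ℝ)-1) := by
              rw [hθeq, hinvlam, mul_comm]
              exact hcorelog
            have h3 : (1-p)*(p*θ*lam⁻¹) = (p/(1-p)) * ((1-p)^2 * (θ*lam⁻¹)) := by
              field_simp
            have h4 : (1-p)^2 * (θ*lam⁻¹) ≤ Real.log ((n:ℝ)-1) := by
              have h5 : (1-p)^2 ≤ 1 := by
                have h51 : (1-p)^2 = 1 - 2*p + p*p := by ring
                have h52 : p*p ≤ p := by
                  have := mul_le_mul_of_nonneg_left hp1.le hp.le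
                  linarith
                linarith
              have h6 : 0 ≤ θ*lam⁻¹ := by positivity
              calc (1-p)^2 * (θ*lam⁻¹) ≤ 1 * (θ*lam⁻¹) := mul_le_mul_of_nonneg_right h5 h6
              _ = θ*lam⁻¹ := one_mul _
              _ ≤ Real.log ((n:ℝ)-1) := hcore
            have h7 := mul_le_mul_of_nonneg_left h4 (show (0:ℝ) ≤ p/(1-p) by positivity)
            rw [h3]
            linarith
    calc (1-p)*W*c⁻¹ + γ ≤ (1-p)*W*c⁻¹ + p*W := by linarith
    _ = W*((1-p)*c⁻¹ + p) := by ring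
    _ ≤ 1 := hWE

  -- identity for γ^(1-p)
  have hwW : w * W = w ^ ((1:ℝ)/(1-p)) := by
    have hxp : (1:ℝ)/(1-p) = 1 + p/(1-p) := by field_simp; ring
    rw [hxp, Real.rpow_add hw0, Real.rpow_one, hWdef]
  have hγpow : γ ^ (1-p) = ((n:ℝ)-(r:ℝ))^(1-p) * w := by
    rw [hγdef, hwW, Real.mul_rpow (by linarith : (0:ℝ) ≤ (n:ℝ)-(r:ℝ))
      (Real.rpow_nonneg hw0.le _)]
    congr 1
    rw [← Real.rpow_mul hw0.le, one_div, inv_mul_cancel₀ (ne_of_gt hp1'), Real.rpow_one]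
  have hem0 : (0:ℝ) < em := by linarith
  have hlamem0 : 0 < lam * em := mul_pos hlam0 hem0
  -- F12
  have hb : (1-c)*((r:ℝ)-2) + 1 ≤ (1-γ)^(1-p) * (lam*em)^p := by
    have hRHS : (1-γ)^(1-p) * (lam*em)^p
        = Real.exp ((1-p)*Real.log (1-γ) + p*Real.log (lam*em)) := by
      rw [Real.rpow_def_of_pos hγ1, Real.rpow_def_of_pos hlamem0, ← Real.exp_add]
      congr 1
      ring
    have hLHS : (1-c)*((r:ℝ)-2) + 1 ≤ Real.exp (p*θ*((r:ℝ)-2)) := by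
      have ha1 : (1-c)*((r:ℝ)-2) ≤ p*θ*((r:ℝ)-2) :=
        mul_le_mul_of_nonneg_right h1c (by linarith)
      have ha2 := Real.add_one_le_exp (p*θ*((r:ℝ)-2))
      linarith
    rw [hRHS]
    refine hLHS.trans (Real.exp_le_exp.2 ?_)
    have hloglamem : Real.log (lam*em) = -θ + Real.log em := by
      rw [Real.log_mul (ne_of_gt hlam0) (ne_of_gt hem0), hθdef]; ring
    have hlogγ : -Real.log (1-γ) ≤ γ/(1-γ) := by
      have hb1 := Real.log_le_sub_one_of_pos (show (0:ℝ) < (1-γ)⁻¹ by positivity)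
      rw [Real.log_inv] at hb1
      have hb2 : (1-γ)⁻¹ - 1 = γ/(1-γ) := by field_simp; ring
      linarith
    have hγθ : (1-p)*γ ≤ (((n:ℝ)-(r:ℝ))*(p*θ))*(1-γ) := by
      have hc1' : γ ≤ (((n:ℝ)-(r:ℝ))*(p*θ*c⁻¹))*W := by
        have h9 := mul_le_mul_of_nonneg_right
          (mul_le_mul_of_nonneg_left hwle1 (by linarith : (0:ℝ) ≤ (n:ℝ)-(r:ℝ))) hW0.le
        calc γ = (((n:ℝ)-(r:ℝ))*w)*W := by rw [hγdef]; ring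
        _ ≤ (((n:ℝ)-(r:ℝ))*(p*θ*c⁻¹))*W := h9
      have hbr : (1-p)*W*c⁻¹ ≤ 1-γ := by linarith [hK]
      have hc2 : (1-p)*γ ≤ (((n:ℝ)-(r:ℝ))*(p*θ))*((1-p)*W*c⁻¹) := by
        have h9 := mul_le_mul_of_nonneg_left hc1' (show (0:ℝ) ≤ 1-p by linarith)
        calc (1-p)*γ ≤ (1-p)*((((n:ℝ)-(r:ℝ))*(p*θ*c⁻¹))*W) := h9
        _ = (((n:ℝ)-(r:ℝ))*(p*θ))*((1-p)*W*c⁻¹) := by ring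
      have hc3 := mul_le_mul_of_nonneg_left hbr
        (show (0:ℝ) ≤ ((n:ℝ)-(r:ℝ))*(p*θ) by positivity)
      linarith
    rw [hloglamem]
    have he2 : -((1-p)*Real.log (1-γ)) ≤ ((n:ℝ)-(r:ℝ))*(p*θ) := by
      have h9 := mul_le_mul_of_nonneg_left hlogγ (show (0:ℝ) ≤ 1-p by linarith)
      have he1 : (1-p)*(γ/(1-γ)) ≤ ((n:ℝ)-(r:ℝ))*(p*θ) := by
        have h8 : (1-p)*(γ/(1-γ)) = ((1-p)*γ)/(1-γ) := by ring
        rw [h8, div_le_iff₀ hγ1]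
        exact hγθ
      calc -((1-p)*Real.log (1-γ)) = (1-p)*(-Real.log (1-γ)) := by ring
      _ ≤ (1-p)*(γ/(1-γ)) := h9
      _ ≤ ((n:ℝ)-(r:ℝ))*(p*θ) := he1
    have he3 : p*(((n:ℝ)-1)*θ) ≤ p*Real.log em :=
      mul_le_mul_of_nonneg_left (hn1θ.trans hlogem) hp.le
    linarith only [he2, he3]
  -- power mean
  have hPM : S ≤ ((n:ℝ)-(r:ℝ))^(1-p) * A^p := by
    have h := power_mean s1 x hx hp hp1
    rw [hcard1, hcast1, ← hAdef, ← hSdef] at h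
    exact h
  -- chord
  have hyM : ∀ j ∈ s2, y j ≤ M := by
    intro j hj
    have h1 : ∑ k ∈ s2.erase j, u ≤ ∑ k ∈ s2.erase j, y k :=
      Finset.sum_le_sum (fun k hk => hy k (Finset.mem_of_mem_erase hk))
    rw [Finset.sum_const, nsmul_eq_mul] at h1
    have hcarde : (s2.erase j).card = r - 2 := by
      rw [Finset.card_erase_of_mem hj, hcard2]
      omega
    have hcaste : ((r-2:ℕ):ℝ) = (r:ℝ)-2 := by
      rw [Nat.cast_sub hr]; norm_num
    rw [hcarde, hcaste] at h1
    have h2 : y j + ∑ k ∈ s2.erase j, y k = Y := by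
      rw [hYdef]; exact Finset.add_sum_erase s2 y hj
    linarith only [h1, h2, hYM]
  have hchord : ((r:ℝ)-2)*u^p + M^p ≤ T := by
    have hstep : ∀ j ∈ s2, (M - y j)*u^p + (y j - u)*M^p ≤ (M-u)*(y j ^ p) :=
      fun j hj => chord hp hp1 hu (hy j hj) (hyM j hj) hdeg
    have hsumle := Finset.sum_le_sum hstep
    rw [← Finset.mul_sum, ← hTdef] at hsumle
    have hLsum : ∑ j ∈ s2, ((M - y j)*u^p + (y j - u)*M^p)
        = ((((r:ℝ)-1))*M - Y)*u^p + (Y - (((r:ℝ)-1))*u)*M^p := by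
      rw [Finset.sum_add_distrib, ← Finset.sum_mul, ← Finset.sum_mul,
        Finset.sum_sub_distrib, Finset.sum_sub_distrib, Finset.sum_const, Finset.sum_const,
        nsmul_eq_mul, nsmul_eq_mul, hcard2, hcast2, ← hYdef]
    rw [hLsum] at hsumle
    have heq2 : ((((r:ℝ)-1))*M - Y)*u^p + (Y - (((r:ℝ)-1))*u)*M^p
        = (M-u)*(((r:ℝ)-2)*u^p + M^p) := by
      rw [hYM]; ring
    rw [heq2] at hsumle
    have hMu : 0 < M - u := by linarith
    exact le_of_mul_le_mul_left hsumle hMu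
  -- jensen
  have hlamA : 0 ≤ lam*A := mul_nonneg hlam0.le hA0
  have hlamemu : 0 ≤ lam*em*u := mul_nonneg (mul_nonneg hlam0.le hem0.le) hu
  have hJ : γ^(1-p) * (lam*A)^p + (1-γ)^(1-p)*(lam*em*u)^p ≤ (lam*M)^p := by
    have h := jensen2 hp hp1 hγ0 hγp hlamA hlamemu
    have heqM : lam*A + lam*em*u = lam*M := by rw [hMdef]; ring
    rw [heqM] at h
    exact h
  have hx1 : (lam*A)^p = c * A^p := by rw [Real.mul_rpow hlam0.le hA0, hcdef]
  have hx2 : (lam*M)^p = c * M^p := by rw [Real.mul_rpow hlam0.le hM0.le, hcdef]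
  have hx3 : (lam*em*u)^p = (lam*em)^p * u^p := Real.mul_rpow hlamem0.le hu
  have key1 : (1-c)*S ≤ γ^(1-p)*((lam*A)^p) := by
    have k1 : (1-c)*S ≤ (1-c)*(((n:ℝ)-(r:ℝ))^(1-p)*A^p) :=
      mul_le_mul_of_nonneg_left hPM (by linarith)
    have k2 : γ^(1-p)*((lam*A)^p) = (1-c)*(((n:ℝ)-(r:ℝ))^(1-p)*A^p) := by
      rw [hγpow, hx1, ← hwc]; ring
    linarith
  have key2 : ((1-c)*((r:ℝ)-2)+1)*u^p ≤ (1-γ)^(1-p)*((lam*em*u)^p) := by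
    have h9 := mul_le_mul_of_nonneg_right hb hup
    rw [hx3]
    calc ((1-c)*((r:ℝ)-2)+1)*u^p ≤ ((1-γ)^(1-p)*(lam*em)^p)*u^p := h9
    _ = (1-γ)^(1-p)*((lam*em)^p*u^p) := by ring
  have key3 : (1-c)*S + ((1-c)*((r:ℝ)-2)+1)*u^p ≤ c*M^p := by
    rw [← hx2]
    linarith only [hJ, key1, key2]
  have hcT : c*(((r:ℝ)-2)*u^p + M^p) ≤ c*T := mul_le_mul_of_nonneg_left hchord hc0.le
  linarith only [key3, hcT]
end

section
/- Fix an integer n ≥ 3 and p ∈ (0,1), and define φ(x) = ((n/(n-1))^p - 1)^{1/(1-p)}·(n - x) + ((n/(n-1))^p·(x-1) - x + 2)^{1/(1-p)}·(n - x + 2)^{-p/(1-p)} for x ∈ [2, n-1]. Then φ is convex on [2, n-1]. -/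
open Real Set

lemma pers_key (q : ℝ) (hq : 1 ≤ q) {a1 a2 b1 b2 l m : ℝ}
    (ha1 : 0 ≤ a1) (ha2 : 0 ≤ a2) (hb1 : 0 < b1) (hb2 : 0 < b2)
    (hl : 0 ≤ l) (hm : 0 ≤ m) (hlm : l + m = 1) :
    (l * a1 + m * a2) ^ q * (l * b1 + m * b2) ^ (1 - q)
      ≤ l * (a1 ^ q * b1 ^ (1 - q)) + m * (a2 ^ q * b2 ^ (1 - q)) := by
  set B : ℝ := l * b1 + m * b2 with hB
  have hBpos : 0 < B := by
    rcases eq_or_lt_of_le hl with h | h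
    · have hm1 : m = 1 := by linarith
      simp [hB, ← h, hm1, hb2]
    · nlinarith [mul_nonneg hm hb2.le]
  have conv := convexOn_rpow hq
  have h := conv.2 (show a1 * (B / b1) ∈ Ici (0:ℝ) from Set.mem_Ici.mpr (by positivity))
    (show a2 * (B / b2) ∈ Ici (0:ℝ) from Set.mem_Ici.mpr (by positivity))
    (show (0:ℝ) ≤ l * b1 / B by positivity)
    (show (0:ℝ) ≤ m * b2 / B by positivity)
    (show l * b1 / B + m * b2 / B = 1 by field_simp; exact hB.symm)
  simp only [smul_eq_mul] at h
  have hmix : l * b1 / B * (a1 * (B / b1)) + m * b2 / B * (a2 * (B / b2)) = l * a1 + m * a2 := by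
    field_simp
  rw [hmix] at h
  have e1 : l * b1 / B * (a1 * (B / b1)) ^ q = l * (a1 ^ q * b1 ^ (1 - q)) * B ^ (q - 1) := by
    rw [Real.mul_rpow ha1 (by positivity), Real.div_rpow hBpos.le hb1.le,
      Real.rpow_sub hb1, Real.rpow_sub hBpos, Real.rpow_one, Real.rpow_one]
    have h1 : b1 ^ q ≠ 0 := by positivity
    have h2 : B ≠ 0 := hBpos.ne'
    field_simp
  have e2 : m * b2 / B * (a2 * (B / b2)) ^ q = m * (a2 ^ q * b2 ^ (1 - q)) * B ^ (q - 1) := by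
    rw [Real.mul_rpow ha2 (by positivity), Real.div_rpow hBpos.le hb2.le,
      Real.rpow_sub hb2, Real.rpow_sub hBpos, Real.rpow_one, Real.rpow_one]
    have h1 : b2 ^ q ≠ 0 := by positivity
    have h2 : B ≠ 0 := hBpos.ne'
    field_simp
  rw [e1, e2] at h
  have hcancel : B ^ (q - 1) * B ^ (1 - q) = 1 := by
    rw [← Real.rpow_add hBpos]; norm_num
  have hBe : (0:ℝ) ≤ B ^ (1 - q) := by positivity
  calc (l * a1 + m * a2) ^ q * B ^ (1 - q)
      ≤ (l * (a1 ^ q * b1 ^ (1 - q)) * B ^ (q - 1) + m * (a2 ^ q * b2 ^ (1 - q)) * B ^ (q - 1)) * B ^ (1 - q) :=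
        mul_le_mul_of_nonneg_right h hBe
    _ = l * (a1 ^ q * b1 ^ (1 - q)) + m * (a2 ^ q * b2 ^ (1 - q)) := by
        rw [add_mul]
        linear_combination (l * (a1 ^ q * b1 ^ (1 - q)) + m * (a2 ^ q * b2 ^ (1 - q))) * hcancel

theorem stmt12 (n : ℕ) (hn : 3 ≤ n) (p : ℝ) (hp : 0 < p) (hp1 : p < 1) :
    ConvexOn ℝ (Set.Icc (2 : ℝ) ((n : ℝ) - 1))
      (fun x : ℝ =>
        (((n : ℝ) / ((n : ℝ) - 1)) ^ p - 1) ^ (1 / (1 - p)) * ((n : ℝ) - x)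
          + (((n : ℝ) / ((n : ℝ) - 1)) ^ p * (x - 1) - x + 2) ^ (1 / (1 - p))
            * ((n : ℝ) - x + 2) ^ (-p / (1 - p))) := by
  have hn3 : (3:ℝ) ≤ (n:ℝ) := by exact_mod_cast hn
  have h1p : 0 < 1 - p := by linarith
  set c : ℝ := ((n:ℝ) / ((n:ℝ) - 1)) ^ p with hc
  have hbase : 1 < (n:ℝ) / ((n:ℝ) - 1) := by
    rw [lt_div_iff₀ (by linarith)]; linarith
  have hc1 : 1 < c := by
    rw [hc]
    exact Real.one_lt_rpow_iff_of_pos (by linarith) |>.mpr (Or.inl ⟨hbase, hp⟩)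
  have hq : 1 ≤ 1 / (1 - p) := by
    rw [le_div_iff₀ h1p]; linarith
  have hexp : -p / (1 - p) = 1 - 1 / (1 - p) := by
    field_simp
    ring
  constructor
  · exact convex_Icc _ _
  · intro x hx y hy a b ha hb hab
    simp only [smul_eq_mul, hexp]
    have hAx : 0 ≤ c * (x - 1) - x + 2 := by nlinarith [hx.1]
    have hAy : 0 ≤ c * (y - 1) - y + 2 := by nlinarith [hy.1]
    have hBx : (0:ℝ) < (n:ℝ) - x + 2 := by linarith [hx.2]
    have hBy : (0:ℝ) < (n:ℝ) - y + 2 := by linarith [hy.2]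
    have key := pers_key (1 / (1 - p)) hq hAx hAy hBx hBy ha hb hab
    have eA : c * ((a * x + b * y) - 1) - (a * x + b * y) + 2
        = a * (c * (x - 1) - x + 2) + b * (c * (y - 1) - y + 2) := by
      have hb' : b = 1 - a := by linarith
      subst hb'; ring
    have eB : (n:ℝ) - (a * x + b * y) + 2
        = a * ((n:ℝ) - x + 2) + b * ((n:ℝ) - y + 2) := by
      have hb' : b = 1 - a := by linarith
      subst hb'; ring
    rw [eA, eB] at *
    have eL : (c - 1) ^ (1 / (1 - p)) * ((n:ℝ) - (a * x + b * y))
        = a * ((c - 1) ^ (1 / (1 - p)) * ((n:ℝ) - x))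
          + b * ((c - 1) ^ (1 / (1 - p)) * ((n:ℝ) - y)) := by
      have hb' : b = 1 - a := by linarith
      subst hb'; ring
    rw [eL]
    linarith [key]
end

section
/- For every integer n ≥ 3, every real p ∈ (0,1), and every x ∈ [2, n-1], one has ((n/(n-1))^p - 1)^{1/(1-p)}·(n - x) + ((n/(n-1))^p·(x-1) - x + 2)^{1/(1-p)}·(n - x + 2)^{-p/(1-p)} ≤ 1. -/
set_option maxHeartbeats 1000000

theorem stmt13 (n : ℕ) (hn : 3 ≤ n) (p : ℝ) (hp : 0 < p) (hp1 : p < 1)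
    (x : ℝ) (hx : x ∈ Set.Icc (2 : ℝ) ((n : ℝ) - 1)) :
    (((n : ℝ) / ((n : ℝ) - 1)) ^ p - 1) ^ (1 / (1 - p)) * ((n : ℝ) - x)
      + (((n : ℝ) / ((n : ℝ) - 1)) ^ p * (x - 1) - x + 2) ^ (1 / (1 - p))
        * ((n : ℝ) - x + 2) ^ (-p / (1 - p)) ≤ 1 := by
  obtain ⟨hx2, hxn⟩ := hx
  have hn3 : (3:ℝ) ≤ (n:ℝ) := by exact_mod_cast hn
  set N := (n:ℝ) with hN
  clear_value N
  have h1p : (0:ℝ) < 1 - p := by linarith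
  set q : ℝ := 1 / (1 - p) with hq
  clear_value q
  have hq1 : 1 ≤ q := by rw [hq, le_div_iff₀ h1p]; linarith
  have hm2 : (2:ℝ) ≤ N - 1 := by linarith
  have hm0 : (0:ℝ) < N - 1 := by linarith
  have hNx3 : (3:ℝ) ≤ N - x + 2 := by linarith
  have hu1 : (1:ℝ) ≤ N - x := by linarith
  -- Bernoulli bound on c
  have hbase : N / (N - 1) = 1 + 1 / (N - 1) := by field_simp; ring
  have hc_le : (N / (N - 1)) ^ p ≤ 1 + p * (1 / (N - 1)) := by
    rw [hbase]
    have h01 : (0:ℝ) ≤ 1 / (N - 1) := by positivity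
    exact rpow_one_add_le_one_add_mul_self (by linarith) hp.le hp1.le
  have hc_ge : (1:ℝ) ≤ (N / (N - 1)) ^ p := by
    apply Real.one_le_rpow _ hp.le
    rw [le_div_iff₀ hm0]; linarith
  set c : ℝ := (N / (N - 1)) ^ p with hc
  clear_value c
  -- First term bound : (c-1)^q * (N-x) ≤ p/(N-1) * (N-x)
  have hT1 : (c - 1) ^ q ≤ p / (N - 1) := by
    have h1 : (c - 1) ^ q ≤ (p / (N - 1)) ^ q := by
      apply Real.rpow_le_rpow (by linarith) _ (by linarith)
      rw [div_eq_mul_one_div]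
      linarith
    have h2 : (p / (N - 1)) ^ q = p ^ q / (N - 1) ^ q :=
      Real.div_rpow hp.le hm0.le q
    have h3 : p ^ q ≤ p := by
      calc p ^ q ≤ p ^ (1:ℝ) := Real.rpow_le_rpow_of_exponent_ge hp hp1.le hq1
        _ = p := Real.rpow_one p
    have h4 : N - 1 ≤ (N - 1) ^ q := by
      calc N - 1 = (N - 1) ^ (1:ℝ) := (Real.rpow_one _).symm
        _ ≤ (N - 1) ^ q := Real.rpow_le_rpow_of_exponent_le (by linarith) hq1
    have h5 : p ^ q / (N - 1) ^ q ≤ p / (N - 1) := by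
      apply div_le_div₀ hp.le h3 hm0 h4
    linarith
  -- Second term bound via exp
  set L : ℝ := Real.log (N - x + 2) with hL
  clear_value L
  have hL1 : (1:ℝ) ≤ L := by
    rw [hL, Real.le_log_iff_exp_le (by linarith)]
    calc Real.exp 1 ≤ 2.7182818286 := Real.exp_one_lt_d9.le
      _ ≤ N - x + 2 := by linarith
  set a : ℝ := p * (x - 1) / (N - 1) with ha
  clear_value a
  have ha0 : 0 ≤ a := by rw [ha]; apply div_nonneg (mul_nonneg hp.le (by linarith)) hm0.le
  have hB1 : (1:ℝ) ≤ c * (x - 1) - x + 2 := by nlinarith [hc_ge]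
  have hBle : c * (x - 1) - x + 2 ≤ 1 + a := by
    have h1 : (c - 1) * (x - 1) ≤ (p * (1 / (N - 1))) * (x - 1) := by
      apply mul_le_mul_of_nonneg_right (by linarith) (by linarith)
    have h2 : c * (x - 1) - x + 2 = (c - 1) * (x - 1) + 1 := by ring
    have h3 : p * (1 / (N - 1)) * (x - 1) = a := by rw [ha]; ring
    linarith
  have hT2 : (c * (x - 1) - x + 2) ^ q * (N - x + 2) ^ (-p / (1 - p))
      ≤ Real.exp (a * q - L * (p / (1 - p))) := by
    have e1 : (c * (x - 1) - x + 2) ^ q ≤ Real.exp (a * q) := by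
      calc (c * (x - 1) - x + 2) ^ q ≤ (Real.exp a) ^ q := by
            apply Real.rpow_le_rpow (by linarith) _ (by linarith)
            calc c * (x - 1) - x + 2 ≤ 1 + a := hBle
              _ ≤ Real.exp a := by linarith [Real.add_one_le_exp a]
        _ = Real.exp (a * q) := by
            rw [← Real.exp_mul]
    have e2 : (N - x + 2) ^ (-p / (1 - p)) = Real.exp (L * (-p / (1 - p))) := by
      rw [Real.rpow_def_of_pos (by linarith), hL]
    calc (c * (x - 1) - x + 2) ^ q * (N - x + 2) ^ (-p / (1 - p))
        ≤ Real.exp (a * q) * Real.exp (L * (-p / (1 - p))) := by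
          rw [e2]
          apply mul_le_mul_of_nonneg_right e1 (Real.exp_pos _).le
      _ = Real.exp (a * q - L * (p / (1 - p))) := by
          rw [← Real.exp_add]; ring_nf
  -- The exponent is -p*q*M with M = L - (x-1)/(N-1)
  set M : ℝ := L - (x - 1) / (N - 1) with hM
  clear_value M
  have hMu : (N - x) / (N - 1) ≤ M := by
    rw [hM]
    have : (x - 1) / (N - 1) + (N - x) / (N - 1) = 1 := by field_simp; ring
    linarith
  have hM0 : 0 < M := lt_of_lt_of_le (div_pos (by linarith) hm0) hMu
  have hexp_eq : a * q - L * (p / (1 - p)) = -(p * q * M) := by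
    rw [ha, hq, hM]; field_simp; ring
  have hexp_le : Real.exp (a * q - L * (p / (1 - p))) ≤ 1 / (1 + p * q * M) := by
    rw [hexp_eq]
    have ht0 : 0 < p * q * M := mul_pos (mul_pos hp (by linarith)) hM0
    have h1 : 1 + p * q * M ≤ Real.exp (p * q * M) := by
      have := Real.add_one_le_exp (p * q * M); linarith
    rw [Real.exp_neg, inv_eq_one_div]
    apply one_div_le_one_div_of_le (by linarith) h1
  -- combine
  have hfinal : p / (N - 1) * (N - x) + 1 / (1 + p * q * M) ≤ 1 := by
    have ht0 : 0 < p * q * M := mul_pos (mul_pos hp (by linarith)) hM0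
    have hMm : N - x ≤ M * (N - 1) := by
      rw [div_le_iff₀ hm0] at hMu; linarith
    have hqe : q * (1 - p) = 1 := by rw [hq]; field_simp
    have f1 : (0:ℝ) ≤ N - 1 - p * (N - x) := by
      have i1 : (0:ℝ) ≤ p * (x - 1) := mul_nonneg hp.le (by linarith)
      have i2 : (0:ℝ) ≤ (1 - p) * (N - 1) := mul_nonneg (by linarith) (by linarith)
      nlinarith [i1, i2]
    have g1 : (0:ℝ) ≤ (M * (N - 1) - (N - x)) * (N - 1 - p * (N - x)) :=
      mul_nonneg (by linarith) f1
    have g2 : (0:ℝ) ≤ p * (N - x) * ((N - 1) - (N - x)) :=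
      mul_nonneg (mul_nonneg hp.le (by linarith)) (by linarith)
    have hstep : (N - x) * (1 - p) + (N - x) * p * M ≤ M * (N - 1) := by
      nlinarith [g1, g2, hm0]
    have hcross : p * (N - x) * (1 + p * q * M) ≤ p * q * M * (N - 1) := by
      rw [← mul_le_mul_iff_of_pos_right h1p]
      have e1 : p * (N - x) * (1 + p * q * M) * (1 - p)
          = p * (N - x) * ((1 - p) + p * M) := by
        linear_combination (p * p * (N - x) * M) * hqe
      have e2 : p * q * M * (N - 1) * (1 - p) = p * M * (N - 1) := by
        linear_combination (p * M * (N - 1)) * hqe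
      rw [e1, e2]
      nlinarith [mul_le_mul_of_nonneg_left hstep hp.le]
    have hkey : p / (N - 1) * (N - x) ≤ (p * q * M) / (1 + p * q * M) := by
      rw [div_mul_eq_mul_div, div_le_div_iff₀ hm0 (by linarith)]
      exact hcross
    have : (p * q * M) / (1 + p * q * M) = 1 - 1 / (1 + p * q * M) := by
      field_simp; ring
    linarith
  have hT1' : (c - 1) ^ q * (N - x) ≤ p / (N - 1) * (N - x) := by
    apply mul_le_mul_of_nonneg_right hT1 (by linarith)
  calc (c - 1) ^ q * (N - x) + (c * (x - 1) - x + 2) ^ q * (N - x + 2) ^ (-p / (1 - p))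
      ≤ p / (N - 1) * (N - x) + 1 / (1 + p * q * M) := by
        have := hT2.trans hexp_le
        linarith
    _ ≤ 1 := hfinal
end

section
/- Let n ≥ 3 be an integer, p > 0, and let x_1 ≤ x_2 ≤ ... ≤ x_n be nonnegative reals with mean m = (1/n)·Σ x_i, and let r ∈ {1,...,n} be such that x_i < m for i < r and x_i ≥ m for i ≥ r. Then Σ_{r ≤ j < i ≤ n} (x_i - x_j)^p + (r-1)·Σ_{i=r}^n (x_i - m)^p ≤ (1 - 1/n)^p · Σ_{1 ≤ j < i ≤ n} (x_i - x_j)^p. -/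
open Finset Real

private lemma rpow_subadd {a b p : ℝ} (ha : 0 ≤ a) (hb : 0 ≤ b) (hp : 0 ≤ p) (hp1 : p ≤ 1) :
    (a + b) ^ p ≤ a ^ p + b ^ p := by
  lift a to NNReal using ha
  lift b to NNReal using hb
  have := NNReal.rpow_add_le_add_rpow a b hp hp1
  exact_mod_cast this

private lemma sm2 {w a b p : ℝ} (hw : 0 ≤ w) (ha : 0 ≤ a) (hb : 0 ≤ b)
    (hp : 0 ≤ p) (hp1 : p ≤ 1) :
    (w + a + b) ^ p + w ^ p ≤ (w + a) ^ p + (w + b) ^ p := by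
  rcases eq_or_lt_of_le (by positivity : (0:ℝ) ≤ a + b) with h | h
  · have ha0 : a = 0 := by linarith
    have hb0 : b = 0 := by linarith
    simp [ha0, hb0]
  · have hcon := Real.concaveOn_rpow hp hp1
    have hwt : (0:ℝ) ≤ w + (a + b) := by linarith
    have e1 := hcon.2 (Set.mem_Ici.2 hw) (Set.mem_Ici.2 hwt)
      (by positivity : (0:ℝ) ≤ b / (a+b)) (by positivity : (0:ℝ) ≤ a / (a+b))
      (by field_simp; try ring)
    have e2 := hcon.2 (Set.mem_Ici.2 hw) (Set.mem_Ici.2 hwt)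
      (by positivity : (0:ℝ) ≤ a / (a+b)) (by positivity : (0:ℝ) ≤ b / (a+b))
      (by field_simp; try ring)
    simp only [smul_eq_mul] at e1 e2
    have hpt1 : b / (a+b) * w + a / (a+b) * (w + (a+b)) = w + a := by field_simp; try ring
    have hpt2 : a / (a+b) * w + b / (a+b) * (w + (a+b)) = w + b := by field_simp; try ring
    rw [hpt1] at e1
    rw [hpt2] at e2
    have hwab : w + (a + b) = w + a + b := by ring
    rw [hwab] at e1 e2
    have q1 : b/(a+b) * w ^ p + a/(a+b) * w ^ p = w ^ p := by field_simp; try ring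
    have q2 : a/(a+b) * (w+a+b) ^ p + b/(a+b) * (w+a+b) ^ p = (w+a+b) ^ p := by
      field_simp; try ring
    linarith [e1, e2]

private lemma sm_sum {p : ℝ} (hp : 0 ≤ p) (hp1 : p ≤ 1) (S : Finset ℕ) (v : ℕ → ℝ)
    {w : ℝ} (hw : 0 ≤ w) (hv : ∀ j ∈ S, 0 ≤ v j) :
    (w + ∑ j ∈ S, v j) ^ p + ((S.card : ℝ) - 1) * w ^ p ≤ ∑ j ∈ S, (w + v j) ^ p := by
  induction S using Finset.cons_induction with
  | empty => simp
  | cons a S ha ih =>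
    have hva : 0 ≤ v a := hv a (Finset.mem_cons_self a S)
    have hvS : ∀ j ∈ S, 0 ≤ v j := fun j hj => hv j (Finset.mem_cons_of_mem hj)
    have hVS : 0 ≤ ∑ j ∈ S, v j := Finset.sum_nonneg hvS
    have hih := ih hvS
    have hsm := sm2 hw hva hVS hp hp1
    rw [Finset.sum_cons, Finset.sum_cons, Finset.card_cons]
    push_cast
    have : w + (v a + ∑ j ∈ S, v j) = w + v a + ∑ j ∈ S, v j := by ring
    rw [this]
    linarith [hsm, hih]

private lemma chord_bound {u T p : ℝ} (hu : 0 ≤ u) (huT : u ≤ T) (hT : 0 < T)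
    (hp : 0 ≤ p) (hp1 : p ≤ 1) :
    T ^ p + (u / T) * (((2:ℝ) ^ p - 1) * T ^ p) ≤ (u + T) ^ p := by
  have hcon := Real.concaveOn_rpow hp hp1
  have e := hcon.2 (Set.mem_Ici.2 hT.le) (Set.mem_Ici.2 (by linarith : (0:ℝ) ≤ 2*T))
    (by rw [sub_nonneg, div_le_one hT]; exact huT : (0:ℝ) ≤ 1 - u/T)
    (by positivity : (0:ℝ) ≤ u/T) (by ring)
  simp only [smul_eq_mul] at e
  have hpt : (1 - u/T) * T + u/T * (2*T) = u + T := by field_simp; ring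
  rw [hpt] at e
  have h2T : ((2:ℝ)*T) ^ p = 2 ^ p * T ^ p := Real.mul_rpow (by norm_num) hT.le
  rw [h2T] at e
  nlinarith [e]

private lemma scalar_p_ge_one {n r p : ℝ} (hn : 3 ≤ n) (hr : 2 ≤ r) (hrn : r ≤ n)
    (hp : 1 ≤ p) :
    n - 1 ≤ (1 - 1/n) ^ p * (n - r) + (1 - 1/n) ^ p * ((r - 1) * (1 + 1/(r-1)) ^ p) := by
  have hn0 : (0:ℝ) < n := by linarith
  have hr1 : (0:ℝ) < r - 1 := by linarith
  have hθ0 : (0:ℝ) < 1 - 1/n := by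
    rw [sub_pos, div_lt_one hn0]; linarith
  have hμ0 : (0:ℝ) < 1 + 1/(r-1) := by positivity
  have B1 : 1 + p * ((1 - 1/n) - 1) ≤ (1 - 1/n) ^ p := by
    have := one_add_mul_self_le_rpow_one_add (s := (1 - 1/n) - 1) (by linarith) hp
    convert this using 2 <;> ring
  have B2 : 1 + p * ((1 - 1/n) * (1 + 1/(r-1)) - 1) ≤ ((1 - 1/n) * (1 + 1/(r-1))) ^ p := by
    have := one_add_mul_self_le_rpow_one_add
      (s := (1 - 1/n) * (1 + 1/(r-1)) - 1) (by nlinarith) hp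
    convert this using 2 <;> ring
  have hmul : ((1 - 1/n) * (1 + 1/(r-1))) ^ p = (1 - 1/n) ^ p * (1 + 1/(r-1)) ^ p :=
    Real.mul_rpow hθ0.le hμ0.le
  rw [hmul] at B2
  have heq : (n - r) * ((1 - 1/n) - 1) + (r - 1) * ((1 - 1/n) * (1 + 1/(r-1)) - 1) = 0 := by
    field_simp
    ring
  have m1 : (n - r) * (1 + p * ((1 - 1/n) - 1)) ≤ (n - r) * (1 - 1/n) ^ p :=
    mul_le_mul_of_nonneg_left B1 (by linarith)
  have m2 : (r - 1) * (1 + p * ((1 - 1/n) * (1 + 1/(r-1)) - 1))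
      ≤ (r - 1) * ((1 - 1/n) ^ p * (1 + 1/(r-1)) ^ p) :=
    mul_le_mul_of_nonneg_left B2 (by linarith)
  have hpeq : p * ((n - r) * ((1 - 1/n) - 1) + (r - 1) * ((1 - 1/n) * (1 + 1/(r-1)) - 1)) = 0 := by
    rw [heq]; ring
  nlinarith [m1, m2, hpeq]

private lemma scalar_p_le_one {n k p : ℝ} (hn : 3 ≤ n) (hk : k = 2 ∨ 3 ≤ k) (hkn : k ≤ n - 1)
    (hp : 0 < p) (hp1 : p ≤ 1) :
    (n - 1 - (1 - 1/n) ^ p * (n - 2)) * k ≤ (1 - 1/n) ^ p * ((k - 1 + 2 ^ p) * k ^ p) := by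
  have hn0 : (0:ℝ) < n := by linarith
  have hk2 : (2:ℝ) ≤ k := by rcases hk with h | h <;> linarith
  have hk0 : (0:ℝ) < k := by linarith
  have hθ0 : (0:ℝ) < 1 - 1/n := by rw [sub_pos, div_lt_one hn0]; linarith
  set θ : ℝ := 1 - 1/n with hθdef
  have rp : ∀ z : ℝ, 0 < z → 1 + p * Real.log z ≤ z ^ p := by
    intro z hz
    rw [Real.rpow_def_of_pos hz]
    nlinarith [Real.add_one_le_exp (Real.log z * p)]
  have t1 : 1 + p * Real.log θ ≤ θ ^ p := rp θ hθ0
  have t2 : 1 + p * (Real.log θ + Real.log k) ≤ (θ * k) ^ p := by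
    have := rp (θ * k) (by positivity)
    rwa [Real.log_mul hθ0.ne' hk0.ne'] at this
  have t3 : 1 + p * (Real.log 2 + (Real.log θ + Real.log k)) ≤ (2 * (θ * k)) ^ p := by
    have := rp (2 * (θ * k)) (by positivity)
    rwa [Real.log_mul (by norm_num) (by positivity), Real.log_mul hθ0.ne' hk0.ne'] at this
  -- logarithmic estimates
  have l1 : -((n - 1) * Real.log θ) ≤ 1 := by
    have hinv : Real.log θ⁻¹ ≤ θ⁻¹ - 1 := Real.log_le_sub_one_of_pos (by positivity)
    rw [Real.log_inv] at hinv
    have hθval : θ⁻¹ - 1 = 1 / (n - 1) := by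
      have hθeq : θ = (n - 1)/n := by rw [hθdef]; field_simp
      rw [hθeq, inv_div, div_sub_one (by linarith : n - 1 ≠ 0)]
      norm_num
    rw [hθval] at hinv
    have hn1 : (0:ℝ) < n - 1 := by linarith
    calc -((n - 1) * Real.log θ) = (n - 1) * (-Real.log θ) := by ring
      _ ≤ (n - 1) * (1 / (n - 1)) := mul_le_mul_of_nonneg_left hinv hn1.le
      _ = 1 := by field_simp
  have l2 : k ≤ k * Real.log k + Real.log 2 := by
    rcases hk with h | h
    · rw [h]
      have := Real.log_two_gt_d9
      linarith
    · have h3 : (1:ℝ) ≤ Real.log 3 := by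
        rw [Real.le_log_iff_exp_le (by norm_num : (0:ℝ) < 3)]
        have := Real.exp_one_lt_d9
        linarith
      have hlk : (1:ℝ) ≤ Real.log k :=
        h3.trans (Real.log_le_log (by norm_num) h)
      nlinarith [Real.log_nonneg (by norm_num : (1:ℝ) ≤ 2)]
  have hXi : 0 ≤ (n - 1) * k * Real.log θ + (k * Real.log k + Real.log 2) := by
    have e1 : k * (-((n - 1) * Real.log θ)) ≤ k * 1 :=
      mul_le_mul_of_nonneg_left l1 hk0.le
    nlinarith [e1, l2]
  have P1 : 0 ≤ p * ((n - 1) * k * Real.log θ + (k * Real.log k + Real.log 2)) :=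
    mul_nonneg hp.le hXi
  have r1 : (θ * k) ^ p = θ ^ p * k ^ p := Real.mul_rpow hθ0.le hk0.le
  have r2 : (2 * (θ * k)) ^ p = 2 ^ p * (θ ^ p * k ^ p) := by
    rw [Real.mul_rpow (by norm_num) (by positivity), r1]
  have m1 : (n - 2) * k * (1 + p * Real.log θ) ≤ (n - 2) * k * θ ^ p :=
    mul_le_mul_of_nonneg_left t1 (by nlinarith)
  have m2 : (k - 1) * (1 + p * (Real.log θ + Real.log k)) ≤ (k - 1) * (θ * k) ^ p :=
    mul_le_mul_of_nonneg_left t2 (by linarith)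
  rw [r1] at m2
  rw [r2] at t3
  nlinarith [m1, m2, t3, P1]

set_option maxHeartbeats 1600000 in
theorem stmt15 (n r : ℕ) (hn : 3 ≤ n) (hr1 : 1 ≤ r) (hrn : r ≤ n)
    (p : ℝ) (hp : 0 < p) (x : ℕ → ℝ)
    (hx0 : ∀ i ∈ Icc 1 n, 0 ≤ x i)
    (hmono : ∀ i j, 1 ≤ i → i ≤ j → j ≤ n → x i ≤ x j)
    (m : ℝ) (hm : m = (∑ i ∈ Icc 1 n, x i) / n)
    (hlt : ∀ i ∈ Icc 1 n, i < r → x i < m)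
    (hge : ∀ i ∈ Icc 1 n, r ≤ i → m ≤ x i) :
    ∑ i ∈ Icc r n, ∑ j ∈ Ico r i, (x i - x j) ^ p
        + ((r : ℝ) - 1) * ∑ i ∈ Icc r n, (x i - m) ^ p
      ≤ (1 - 1 / (n : ℝ)) ^ p
        * ∑ i ∈ Icc 1 n, ∑ j ∈ Ico 1 i, (x i - x j) ^ p := by
  have hn3 : (3:ℝ) ≤ (n:ℝ) := by exact_mod_cast hn
  have hn0 : (0:ℝ) < (n:ℝ) := by linarith
  have hp0 : 0 ≤ p := hp.le
  have hθ0 : (0:ℝ) < 1 - 1/(n:ℝ) := by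
    rw [sub_pos, div_lt_one hn0]; linarith
  have hθ1 : (1:ℝ) - 1/(n:ℝ) ≤ 1 := by
    have : (0:ℝ) ≤ 1/(n:ℝ) := by positivity
    linarith
  set θ : ℝ := 1 - 1/(n:ℝ) with hθdef
  set c : ℝ := θ ^ p with hcdef
  have hc0 : 0 < c := Real.rpow_pos_of_pos hθ0 p
  have hc1 : c ≤ 1 := Real.rpow_le_one hθ0.le hθ1 hp0
  have hdiff : ∀ i j : ℕ, 1 ≤ j → j ≤ i → i ≤ n → 0 ≤ x i - x j :=
    fun i j h1 h2 h3 => sub_nonneg.2 (hmono j i h1 h2 h3)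
  have hsumx : ∑ i ∈ Icc 1 n, x i = (n:ℝ) * m := by
    rw [hm]; field_simp
  have hcard1n : (Icc 1 n).card = n := by rw [Nat.card_Icc]; omega
  have hzero : ∑ i ∈ Icc 1 n, (x i - m) = 0 := by
    rw [Finset.sum_sub_distrib, hsumx, Finset.sum_const, hcard1n, nsmul_eq_mul, sub_self]
  rcases eq_or_lt_of_le hr1 with hr1' | hr2
  · -- case r = 1 : all values equal m
    have hreq : r = 1 := hr1'.symm
    subst hreq
    have hallm : ∀ i ∈ Icc 1 n, x i = m := by
      have hnn : ∀ i ∈ Icc 1 n, 0 ≤ x i - m := by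
        intro i hi
        have h1 := (Finset.mem_Icc.1 hi).1
        linarith [hge i hi h1]
      have h := (Finset.sum_eq_zero_iff_of_nonneg hnn).1 hzero
      intro i hi
      have := h i hi
      linarith
    have hL1 : ∑ i ∈ Icc 1 n, ∑ j ∈ Ico 1 i, (x i - x j) ^ p = 0 := by
      apply Finset.sum_eq_zero
      intro i hi
      apply Finset.sum_eq_zero
      intro j hj
      obtain ⟨hi1, hi2⟩ := Finset.mem_Icc.1 hi
      obtain ⟨hj1, hj2⟩ := Finset.mem_Ico.1 hj
      rw [hallm i hi, hallm j (Finset.mem_Icc.2 ⟨hj1, le_trans hj2.le hi2⟩),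
        sub_self, Real.zero_rpow hp.ne']
    have hL2 : ∑ i ∈ Icc 1 n, (x i - m) ^ p = 0 := by
      apply Finset.sum_eq_zero
      intro i hi
      rw [hallm i hi, sub_self, Real.zero_rpow hp.ne']
    rw [hL1, hL2]
    simp
  · -- case 2 ≤ r
    have hr2' : 2 ≤ r := hr2
    have hr2R : (2:ℝ) ≤ (r:ℝ) := by exact_mod_cast hr2'
    have hrnR : (r:ℝ) ≤ (n:ℝ) := by exact_mod_cast hrn
    set Sa := ∑ i ∈ Icc r n, (x i - m) ^ p with hSadef
    set Wa := ∑ i ∈ Icc r n, ∑ j ∈ Ico r i, (x i - x j) ^ p with hWadef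
    set X := ∑ i ∈ Icc r n, ∑ j ∈ Ico 1 r, (x i - x j) ^ p with hXdef
    set Wb := ∑ i ∈ Ico 1 r, ∑ j ∈ Ico 1 i, (x i - x j) ^ p with hWbdef
    set T := ∑ i ∈ Icc r n, (x i - m) with hTdef
    have hgeA : ∀ i ∈ Icc r n, 0 ≤ x i - m := by
      intro i hi
      obtain ⟨hir, hin⟩ := Finset.mem_Icc.1 hi
      have h1 : i ∈ Icc 1 n := Finset.mem_Icc.2 ⟨le_trans hr1 hir, hin⟩
      linarith [hge i h1 hir]
    have hltB : ∀ j ∈ Ico 1 r, 0 ≤ m - x j := by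
      intro j hj
      obtain ⟨hj1, hjr⟩ := Finset.mem_Ico.1 hj
      have h1 : j ∈ Icc 1 n := Finset.mem_Icc.2 ⟨hj1, le_trans hjr.le hrn⟩
      linarith [hlt j h1 hjr]
    have hdAB : ∀ i ∈ Icc r n, ∀ j ∈ Ico 1 r, 0 ≤ x i - x j := by
      intro i hi j hj
      obtain ⟨hir, hin⟩ := Finset.mem_Icc.1 hi
      obtain ⟨hj1, hjr⟩ := Finset.mem_Ico.1 hj
      exact hdiff i j hj1 (le_trans hjr.le hir) hin
    have hSa0 : 0 ≤ Sa :=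
      Finset.sum_nonneg fun i hi => Real.rpow_nonneg (hgeA i hi) p
    have hWa0 : 0 ≤ Wa := by
      apply Finset.sum_nonneg
      intro i hi
      apply Finset.sum_nonneg
      intro j hj
      obtain ⟨hir, hin⟩ := Finset.mem_Icc.1 hi
      obtain ⟨hjr, hji⟩ := Finset.mem_Ico.1 hj
      exact Real.rpow_nonneg (hdiff i j (le_trans hr1 hjr) hji.le hin) p
    have hX0 : 0 ≤ X :=
      Finset.sum_nonneg fun i hi => Finset.sum_nonneg fun j hj =>
        Real.rpow_nonneg (hdAB i hi j hj) p
    have hWb0 : 0 ≤ Wb := by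
      apply Finset.sum_nonneg
      intro i hi
      apply Finset.sum_nonneg
      intro j hj
      obtain ⟨hi1, hir⟩ := Finset.mem_Ico.1 hi
      obtain ⟨hj1, hji⟩ := Finset.mem_Ico.1 hj
      exact Real.rpow_nonneg (hdiff i j hj1 hji.le (le_trans hir.le hrn)) p
    have hT0 : 0 ≤ T := Finset.sum_nonneg hgeA
    have hcardB : ((Ico 1 r).card : ℝ) = (r:ℝ) - 1 := by
      rw [Nat.card_Ico]
      push_cast [hr1]
      ring
    have hsplitIcc : ∀ (f : ℕ → ℝ), ∑ i ∈ Icc 1 n, f i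
        = ∑ i ∈ Ico 1 r, f i + ∑ i ∈ Icc r n, f i := by
      intro f
      have h1 : Icc 1 n = Ico 1 (n+1) := by rw [Finset.Ico_add_one_right_eq_Icc]
      have h2 : Icc r n = Ico r (n+1) := by rw [Finset.Ico_add_one_right_eq_Icc]
      rw [h1, h2]
      exact (Finset.sum_Ico_consecutive f hr1 (Nat.le_succ_of_le hrn)).symm
    have hTB : ∑ j ∈ Ico 1 r, (m - x j) = T := by
      have h1 := hsplitIcc (fun i => x i - m)
      rw [hzero] at h1
      have h2 : ∑ j ∈ Ico 1 r, (m - x j) = - ∑ j ∈ Ico 1 r, (x j - m) := by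
        rw [← Finset.sum_neg_distrib]
        apply Finset.sum_congr rfl
        intro j _
        ring
      rw [h2]
      linarith [h1]
    have hsplit : ∑ i ∈ Icc 1 n, ∑ j ∈ Ico 1 i, (x i - x j) ^ p = Wb + (X + Wa) := by
      rw [hsplitIcc (fun i => ∑ j ∈ Ico 1 i, (x i - x j) ^ p)]
      have hinner : ∑ i ∈ Icc r n, ∑ j ∈ Ico 1 i, (x i - x j) ^ p = X + Wa := by
        have h3 : ∀ i ∈ Icc r n, ∑ j ∈ Ico 1 i, (x i - x j) ^ p
            = ∑ j ∈ Ico 1 r, (x i - x j) ^ p + ∑ j ∈ Ico r i, (x i - x j) ^ p := by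
          intro i hi
          obtain ⟨hir, _⟩ := Finset.mem_Icc.1 hi
          rw [Finset.sum_Ico_consecutive _ hr1 hir]
        rw [Finset.sum_congr rfl h3, Finset.sum_add_distrib]
      rw [hinner]
    rw [hsplit]
    -- goal : Wa + (r-1) * Sa ≤ c * (Wb + (X + Wa))
    have hWaSa : Wa ≤ ((n:ℝ) - (r:ℝ)) * Sa := by
      rw [hWadef, hSadef, Finset.mul_sum]
      apply Finset.sum_le_sum
      intro i hi
      obtain ⟨hir, hin⟩ := Finset.mem_Icc.1 hi
      calc ∑ j ∈ Ico r i, (x i - x j) ^ p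
          ≤ ∑ j ∈ Ico r i, (x i - m) ^ p := by
            apply Finset.sum_le_sum
            intro j hj
            obtain ⟨hjr, hji⟩ := Finset.mem_Ico.1 hj
            have hjmem : j ∈ Icc 1 n := Finset.mem_Icc.2
              ⟨le_trans hr1 hjr, le_trans hji.le hin⟩
            have hmxj := hge j hjmem hjr
            exact Real.rpow_le_rpow (hdiff i j (le_trans hr1 hjr) hji.le hin)
              (by linarith) hp0
        _ = ((i - r : ℕ) : ℝ) * (x i - m) ^ p := by
            rw [Finset.sum_const, Nat.card_Ico, nsmul_eq_mul]
        _ ≤ ((n:ℝ) - (r:ℝ)) * (x i - m) ^ p := by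
            apply mul_le_mul_of_nonneg_right _ (Real.rpow_nonneg (hgeA i hi) p)
            rw [Nat.cast_sub hir]
            have : (i:ℝ) ≤ (n:ℝ) := by exact_mod_cast hin
            linarith
    have hMAIN : ((n:ℝ) - 1) * Sa ≤ c * (((n:ℝ) - (r:ℝ)) * Sa) + c * (X + Wb) := by
      rcases le_or_gt 1 p with hp1 | hp1
      · -- p ≥ 1 : Jensen + Bernoulli
        have key : ∀ i ∈ Icc r n, ((n:ℝ) - 1) * (x i - m) ^ p
            ≤ c * (((n:ℝ) - (r:ℝ)) * (x i - m) ^ p)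
              + c * ∑ j ∈ Ico 1 r, (x i - x j) ^ p := by
          intro i hi
          obtain ⟨hir, hin⟩ := Finset.mem_Icc.1 hi
          have hu0 : 0 ≤ x i - m := hgeA i hi
          have hup0 : 0 ≤ (x i - m) ^ p := Real.rpow_nonneg hu0 p
          have huT : x i - m ≤ T := Finset.single_le_sum hgeA hi
          have hs'0 : (0:ℝ) < (r:ℝ) - 1 := by linarith
          have hzB : ∀ j ∈ Ico 1 r, 0 ≤ x i - x j := fun j hj => hdAB i hi j hj
          have hwsum : ∑ _j ∈ Ico 1 r, (1/((r:ℝ)-1)) = 1 := by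
            rw [Finset.sum_const, nsmul_eq_mul, hcardB]
            field_simp
          have hJ : (∑ j ∈ Ico 1 r, 1/((r:ℝ)-1) * (x i - x j)) ^ p
              ≤ ∑ j ∈ Ico 1 r, 1/((r:ℝ)-1) * (x i - x j) ^ p :=
            Real.rpow_arith_mean_le_arith_mean_rpow (Ico 1 r)
              (fun _ => 1/((r:ℝ)-1)) (fun j => x i - x j)
              (fun j _ => by positivity) hwsum hzB hp1
          have hinner : ∑ j ∈ Ico 1 r, (1/((r:ℝ)-1)) * (x i - x j)
              = (x i - m) + T/((r:ℝ)-1) := by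
            rw [← Finset.mul_sum]
            have h4 : ∑ j ∈ Ico 1 r, (x i - x j)
                = ((r:ℝ)-1) * (x i - m) + T := by
              have h5 : ∀ j ∈ Ico 1 r, x i - x j = (x i - m) + (m - x j) :=
                fun j _ => by ring
              rw [Finset.sum_congr rfl h5, Finset.sum_add_distrib, hTB,
                Finset.sum_const, nsmul_eq_mul, hcardB]
            rw [h4]
            field_simp
            try ring
          rw [hinner, ← Finset.mul_sum] at hJ
          have hstep : (1 + 1/((r:ℝ)-1)) ^ p * (x i - m) ^ p
              ≤ ((x i - m) + T/((r:ℝ)-1)) ^ p := by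
            rw [← Real.mul_rpow (by positivity) hu0]
            apply Real.rpow_le_rpow (by positivity) _ hp0
            have h6 : (x i - m)/((r:ℝ)-1) ≤ T/((r:ℝ)-1) := by gcongr
            have h7 : (1 + 1/((r:ℝ)-1)) * (x i - m)
                = (x i - m) + (x i - m)/((r:ℝ)-1) := by ring
            linarith [h7.le]
          have hscalar := scalar_p_ge_one hn3 hr2R hrnR hp1
          rw [← hθdef, ← hcdef] at hscalar
          have hD : ((r:ℝ)-1) * ((1 + 1/((r:ℝ)-1)) ^ p * (x i - m) ^ p)
              ≤ ∑ j ∈ Ico 1 r, (x i - x j) ^ p := by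
            have h8 := hstep.trans hJ
            have h9 := mul_le_mul_of_nonneg_left h8 hs'0.le
            calc ((r:ℝ)-1) * ((1 + 1/((r:ℝ)-1)) ^ p * (x i - m) ^ p)
                ≤ ((r:ℝ)-1) * (1/((r:ℝ)-1) * ∑ j ∈ Ico 1 r, (x i - x j) ^ p) := h9
              _ = ∑ j ∈ Ico 1 r, (x i - x j) ^ p := by field_simp
          have h10 : ((n:ℝ) - 1) * (x i - m) ^ p
              ≤ (c * ((n:ℝ) - (r:ℝ)) + c * (((r:ℝ)-1) * (1 + 1/((r:ℝ)-1)) ^ p))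
                * (x i - m) ^ p :=
            mul_le_mul_of_nonneg_right hscalar hup0
          have h11 := mul_le_mul_of_nonneg_left hD hc0.le
          linarith [h10, h11]
        have hsum := Finset.sum_le_sum key
        have e1 : ∑ i ∈ Icc r n, ((n:ℝ) - 1) * (x i - m) ^ p = ((n:ℝ) - 1) * Sa :=
          (Finset.mul_sum _ _ _).symm
        have e2 : ∑ i ∈ Icc r n, (c * (((n:ℝ) - (r:ℝ)) * (x i - m) ^ p)
              + c * ∑ j ∈ Ico 1 r, (x i - x j) ^ p)
            = c * (((n:ℝ) - (r:ℝ)) * Sa) + c * X := by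
          rw [Finset.sum_add_distrib, ← Finset.mul_sum, ← Finset.mul_sum, ← Finset.mul_sum]
        rw [e1, e2] at hsum
        have e3 : 0 ≤ c * Wb := mul_nonneg hc0.le hWb0
        have e4 : c * (X + Wb) = c * X + c * Wb := by ring
        linarith [hsum, e3]
      · -- p < 1
        have hp1' : p ≤ 1 := hp1.le
        rcases eq_or_lt_of_le hrn with hreq | hrlt
        · -- subcase r = n
          subst hreq
          have hA : Icc r r = {r} := Finset.Icc_self r
          have hrA : r ∈ Icc r r := Finset.mem_Icc.2 ⟨le_rfl, le_rfl⟩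
          have hSas : Sa = (x r - m) ^ p := by rw [hSadef, hA, Finset.sum_singleton]
          have hXs : X = ∑ j ∈ Ico 1 r, (x r - x j) ^ p := by
            rw [hXdef, hA, Finset.sum_singleton]
          have hx1r : 0 ≤ x r - x 1 := hdiff r 1 le_rfl hr1 le_rfl
          have h1n : 1 ≤ r := hr1
          have hsum_lb : ((r:ℝ) - 1) * x 1 + x r ≤ ∑ i ∈ Icc 1 r, x i := by
            have hsp : ∑ i ∈ Icc 1 r, x i = ∑ i ∈ Ico 1 r, x i + x r := by
              rw [show Icc 1 r = Ico 1 (r+1) from by rw [Finset.Ico_add_one_right_eq_Icc]]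
              rw [Finset.sum_Ico_succ_top h1n]
            have hlb : ∀ j ∈ Ico 1 r, x 1 ≤ x j := by
              intro j hj
              obtain ⟨hj1, hjr⟩ := Finset.mem_Ico.1 hj
              exact hmono 1 j le_rfl hj1 hjr.le
            have hcs := Finset.card_nsmul_le_sum (Ico 1 r) x (x 1) hlb
            rw [Nat.card_Ico, nsmul_eq_mul] at hcs
            have hcast : ((r - 1 : ℕ) : ℝ) = (r:ℝ) - 1 := by
              push_cast [hr1]; ring
            rw [hcast] at hcs
            linarith [hsp.le, hcs]
          have hkey : x r - m ≤ θ * (x r - x 1) := by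
            have hθn : θ * (r:ℝ) = (r:ℝ) - 1 := by rw [hθdef]; field_simp
            have h2 : (x r - m) * (r:ℝ) ≤ (θ * (x r - x 1)) * (r:ℝ) := by
              calc (x r - m) * (r:ℝ) = x r * (r:ℝ) - (r:ℝ) * m := by ring
                _ = x r * (r:ℝ) - ∑ i ∈ Icc 1 r, x i := by rw [hsumx]
                _ ≤ x r * (r:ℝ) - (((r:ℝ) - 1) * x 1 + x r) := by linarith [hsum_lb]
                _ = ((r:ℝ) - 1) * (x r - x 1) := by ring
                _ = (θ * (x r - x 1)) * (r:ℝ) := by rw [← hθn]; ring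
            exact le_of_mul_le_mul_right h2 hn0
          have hSale : Sa ≤ c * (x r - x 1) ^ p := by
            rw [hSas, hcdef, ← Real.mul_rpow hθ0.le hx1r]
            exact Real.rpow_le_rpow (hgeA r hrA) hkey hp0
          have hsub : ∀ j ∈ Ico 1 r, (x r - x 1) ^ p ≤ (x r - x j) ^ p + (x j - x 1) ^ p := by
            intro j hj
            obtain ⟨hj1, hjr⟩ := Finset.mem_Ico.1 hj
            have ha : 0 ≤ x r - x j := hdAB r hrA j hj
            have hb : 0 ≤ x j - x 1 := hdiff j 1 le_rfl hj1 hjr.le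
            have he : x r - x 1 = (x r - x j) + (x j - x 1) := by ring
            rw [he]
            exact rpow_subadd ha hb hp0 hp1'
          have hWb1 : ∑ j ∈ Ico 1 r, (x j - x 1) ^ p ≤ Wb := by
            rw [hWbdef]
            apply Finset.sum_le_sum
            intro i hi
            obtain ⟨hi1, hir⟩ := Finset.mem_Ico.1 hi
            rcases eq_or_lt_of_le hi1 with h1i | h1i
            · rw [← h1i, sub_self, Real.zero_rpow hp.ne']
              simp
            · apply Finset.single_le_sum (f := fun j => (x i - x j) ^ p) ?_
                (Finset.mem_Ico.2 ⟨le_rfl, h1i⟩)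
              intro j hj
              obtain ⟨hj1, hji⟩ := Finset.mem_Ico.1 hj
              exact Real.rpow_nonneg (hdiff i j hj1 hji.le hir.le) p
          have hXWb : ((r:ℝ) - 1) * (x r - x 1) ^ p ≤ X + Wb := by
            have h12 := Finset.sum_le_sum hsub
            rw [Finset.sum_const, nsmul_eq_mul, hcardB, Finset.sum_add_distrib] at h12
            rw [hXs]
            linarith [hWb1, h12]
          have h14 : ((r:ℝ) - 1) * Sa ≤ ((r:ℝ) - 1) * (c * (x r - x 1) ^ p) :=
            mul_le_mul_of_nonneg_left hSale (by linarith)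
          have h16 := mul_le_mul_of_nonneg_left hXWb hc0.le
          have h17 : c * (((r:ℝ) - (r:ℝ)) * Sa) = 0 := by ring
          linarith [h14, h16, h17]
        · -- subcase r < n
          have hrltR : (r:ℝ) + 1 ≤ (n:ℝ) := by exact_mod_cast hrlt
          have hk2 : (2:ℝ) ≤ (n:ℝ) - r + 1 := by linarith
          have hk0 : (0:ℝ) < (n:ℝ) - r + 1 := by linarith
          have hAcard : ((Icc r n).card : ℝ) = (n:ℝ) - r + 1 := by
            rw [Nat.card_Icc]
            push_cast [Nat.le_succ_of_le hrn]
            ring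
          rcases eq_or_lt_of_le hT0 with hTz | hTpos
          · have hallA : ∀ i ∈ Icc r n, x i - m = 0 := by
              have := (Finset.sum_eq_zero_iff_of_nonneg hgeA).1 hTz.symm
              intro i hi; exact this i hi
            have hSaz : Sa = 0 := by
              rw [hSadef]; apply Finset.sum_eq_zero; intro i hi
              rw [hallA i hi, Real.zero_rpow hp.ne']
            rw [hSaz]
            have h19 : 0 ≤ c * (X + Wb) := mul_nonneg hc0.le (by linarith)
            linarith
          · have hXlow : ∀ i ∈ Icc r n, ((x i - m) + T) ^ p + ((r:ℝ) - 2) * (x i - m) ^ p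
                ≤ ∑ j ∈ Ico 1 r, (x i - x j) ^ p := by
              intro i hi
              have hsm := sm_sum hp0 hp1' (Ico 1 r) (fun j => m - x j) (hgeA i hi) hltB
              have hterm : ∀ j ∈ Ico 1 r, ((x i - m) + (m - x j)) ^ p = (x i - x j) ^ p := by
                intro j _
                congr 1
                ring
              calc ((x i - m) + T) ^ p + ((r:ℝ) - 2) * (x i - m) ^ p
                  = ((x i - m) + ∑ j ∈ Ico 1 r, (m - x j)) ^ p
                    + ((↑(#(Ico 1 r)) : ℝ) - 1) * (x i - m) ^ p := by
                    rw [hTB, hcardB]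
                    ring
                _ ≤ ∑ j ∈ Ico 1 r, ((x i - m) + (m - x j)) ^ p := hsm
                _ = ∑ j ∈ Ico 1 r, (x i - x j) ^ p := Finset.sum_congr rfl hterm
            have hchord : ∀ i ∈ Icc r n,
                T ^ p + ((x i - m)/T) * (((2:ℝ) ^ p - 1) * T ^ p) ≤ ((x i - m) + T) ^ p :=
              fun i hi => chord_bound (hgeA i hi) (Finset.single_le_sum hgeA hi) hTpos hp0 hp1'
            have hsumchord : ((n:ℝ) - r + 1) * T ^ p + ((2:ℝ) ^ p - 1) * T ^ p
                ≤ ∑ i ∈ Icc r n, ((x i - m) + T) ^ p := by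
              have h20 := Finset.sum_le_sum hchord
              rw [Finset.sum_add_distrib, Finset.sum_const, nsmul_eq_mul, hAcard] at h20
              have h21 : ∑ i ∈ Icc r n, ((x i - m)/T) * (((2:ℝ) ^ p - 1) * T ^ p)
                  = ((2:ℝ) ^ p - 1) * T ^ p := by
                rw [← Finset.sum_mul]
                have h22 : ∑ i ∈ Icc r n, (x i - m)/T = 1 := by
                  rw [← Finset.sum_div, ← hTdef, div_self hTpos.ne']
                rw [h22, one_mul]
              rw [h21] at h20
              exact h20
            have hq1 : 1 ≤ 1/p := by
              rw [le_div_iff₀ hp, one_mul]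
              exact hp1'
            have hwA : ∑ _i ∈ Icc r n, (1/((n:ℝ) - r + 1)) = 1 := by
              rw [Finset.sum_const, nsmul_eq_mul, hAcard]
              field_simp
            have hJ2 : ∑ i ∈ Icc r n, (1/((n:ℝ) - r + 1)) * (x i - m) ^ p
                ≤ (∑ i ∈ Icc r n, (1/((n:ℝ) - r + 1)) * ((x i - m) ^ p) ^ (1/p)) ^ (1/(1/p)) :=
              Real.arith_mean_le_rpow_mean (Icc r n) _ _ (fun i _ => by positivity) hwA
                (fun i hi => Real.rpow_nonneg (hgeA i hi) p) hq1
            have hsimp1 : ∀ i ∈ Icc r n, (1/((n:ℝ) - r + 1)) * ((x i - m) ^ p) ^ (1/p)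
                = (1/((n:ℝ) - r + 1)) * (x i - m) := by
              intro i hi
              rw [← Real.rpow_mul (hgeA i hi), mul_one_div, div_self hp.ne', Real.rpow_one]
            rw [Finset.sum_congr rfl hsimp1, one_div_one_div] at hJ2
            have hs1 : ∑ i ∈ Icc r n, (1/((n:ℝ) - r + 1)) * (x i - m) ^ p
                = Sa / ((n:ℝ) - r + 1) := by
              rw [← Finset.mul_sum, ← hSadef]
              ring
            have hs2 : ∑ i ∈ Icc r n, (1/((n:ℝ) - r + 1)) * (x i - m) = T / ((n:ℝ) - r + 1) := by
              rw [← Finset.mul_sum, ← hTdef]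
              ring
            rw [hs1, hs2] at hJ2
            have hSaT : Sa ≤ ((n:ℝ) - r + 1) * (T/((n:ℝ) - r + 1)) ^ p := by
              have h23 := mul_le_mul_of_nonneg_left hJ2 hk0.le
              calc Sa = ((n:ℝ) - r + 1) * (Sa/((n:ℝ) - r + 1)) := by field_simp
                _ ≤ ((n:ℝ) - r + 1) * (T/((n:ℝ) - r + 1)) ^ p := h23
            have hk23 : ((n:ℝ) - r + 1) = 2 ∨ (3:ℝ) ≤ (n:ℝ) - r + 1 := by
              rcases Nat.lt_or_ge (r + 1) n with h | h
              · right
                have : (r:ℝ) + 2 ≤ (n:ℝ) := by exact_mod_cast h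
                linarith
              · left
                have hnr1 : n = r + 1 := by omega
                have : (n:ℝ) = (r:ℝ) + 1 := by exact_mod_cast hnr1
                rw [this]
                ring
            have hscalar := scalar_p_le_one hn3 hk23 (by linarith : (n:ℝ) - r + 1 ≤ (n:ℝ) - 1)
              hp hp1'
            rw [← hθdef, ← hcdef] at hscalar
            have hγ0 : 0 ≤ ((n:ℝ) - 1) - c * ((n:ℝ) - 2) := by
              have h29 := mul_le_mul_of_nonneg_right hc1 (by linarith : (0:ℝ) ≤ (n:ℝ) - 2)
              linarith
            have h30 := mul_le_mul_of_nonneg_left hSaT hγ0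
            have hdivp : (T/((n:ℝ) - r + 1)) ^ p = T ^ p / ((n:ℝ) - r + 1) ^ p :=
              Real.div_rpow hT0 hk0.le p
            have hkp0 : 0 < ((n:ℝ) - r + 1) ^ p := Real.rpow_pos_of_pos hk0 p
            have hTp0 : 0 ≤ T ^ p := Real.rpow_nonneg hT0 p
            have h31 : (((n:ℝ) - 1) - c * ((n:ℝ) - 2)) * (((n:ℝ) - r + 1)
                  * (T/((n:ℝ) - r + 1)) ^ p)
                ≤ c * ((((n:ℝ) - r + 1) - 1 + 2 ^ p) * T ^ p) := by
              rw [hdivp]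
              have h32 := mul_le_mul_of_nonneg_right hscalar (div_nonneg hTp0 hkp0.le)
              have e5 : (((n:ℝ) - 1) - c * ((n:ℝ) - 2)) * (((n:ℝ) - r + 1)
                    * (T ^ p / ((n:ℝ) - r + 1) ^ p))
                  = ((((n:ℝ) - 1) - c * ((n:ℝ) - 2)) * ((n:ℝ) - r + 1))
                    * (T ^ p / ((n:ℝ) - r + 1) ^ p) := by ring
              have e6 : (c * ((((n:ℝ) - r + 1) - 1 + 2 ^ p) * ((n:ℝ) - r + 1) ^ p))
                    * (T ^ p / ((n:ℝ) - r + 1) ^ p)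
                  = c * ((((n:ℝ) - r + 1) - 1 + 2 ^ p) * T ^ p) := by
                field_simp
              rw [e5, ← e6]
              exact h32
            have h33 : c * ((((n:ℝ) - r + 1) - 1 + 2 ^ p) * T ^ p)
                ≤ c * ∑ i ∈ Icc r n, ((x i - m) + T) ^ p := by
              apply mul_le_mul_of_nonneg_left _ hc0.le
              calc (((n:ℝ) - r + 1) - 1 + 2 ^ p) * T ^ p
                  = ((n:ℝ) - r + 1) * T ^ p + ((2:ℝ) ^ p - 1) * T ^ p := by ring
                _ ≤ ∑ i ∈ Icc r n, ((x i - m) + T) ^ p := hsumchord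
            have h34 : ∑ i ∈ Icc r n, ((x i - m) + T) ^ p + ((r:ℝ) - 2) * Sa ≤ X := by
              have h35 := Finset.sum_le_sum hXlow
              rw [Finset.sum_add_distrib, ← Finset.mul_sum, ← hSadef, ← hXdef] at h35
              exact h35
            have h36 := mul_le_mul_of_nonneg_left
              (by linarith [h34] :
                ∑ i ∈ Icc r n, ((x i - m) + T) ^ p ≤ X - ((r:ℝ) - 2) * Sa) hc0.le
            have e7 : 0 ≤ c * Wb := mul_nonneg hc0.le hWb0
            linarith [h30, h31, h33, h36, e7]
    have hfin : (1 - c) * Wa ≤ (1 - c) * (((n:ℝ) - (r:ℝ)) * Sa) :=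
      mul_le_mul_of_nonneg_left hWaSa (by linarith)
    have efin : c * (Wb + (X + Wa)) = c * Wa + c * (X + Wb) := by ring
    linarith [hMAIN, hfin]
end

section
/- Let n ≥ 3, let f be the function on the vertices a_1,...,a_n of the complete graph K_n defined by f(a_i) = 0 for i ≤ n-1 and f(a_n) = 1. Then the maximal function satisfies M_{K_n} f(a_i) = 1/n for i ≤ n-1 and M_{K_n} f(a_n) = 1, and consequently for every p > 0, Var_p(M_{K_n} f) = (1 - 1/n)·Var_p(f), so the constant 1 - 1/n in the p-variational inequality on K_n is sharp. -/
open Finset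

/-- The Hardy–Littlewood maximal function on the complete graph `K_n`. -/
noncomputable def maxOpKn (n : ℕ) (f : Fin n → ℝ) (v : Fin n) : ℝ :=
  max |f v| ((∑ w : Fin n, |f w|) / n)

/-- The `p`-variation of a function on the vertices of `K_n`. -/
noncomputable def varpKn (n : ℕ) (p : ℝ) (g : Fin n → ℝ) : ℝ :=
  (∑ v : Fin n, ∑ w ∈ univ.filter (fun w => v < w), |g v - g w| ^ p) ^ (1 / p)

lemma var_aux (n : ℕ) (hn : 3 ≤ n) (p : ℝ) (hp : 0 < p) (a b : ℝ)
    (g : Fin n → ℝ) (hg : ∀ v : Fin n, g v = if v.val = n - 1 then b else a) :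
    varpKn n p g = (((n : ℝ) - 1) * |a - b| ^ p) ^ (1 / p) := by
  have hL : n - 1 < n := by omega
  set L : Fin n := ⟨n - 1, hL⟩ with hLdef
  have hvL : ∀ v : Fin n, v.val = n - 1 ↔ v = L := by
    intro v; constructor
    · intro h; exact Fin.ext h
    · intro h; rw [h]
  unfold varpKn
  have key : ∀ v : Fin n,
      (∑ w ∈ univ.filter (fun w => v < w), |g v - g w| ^ p)
        = if v = L then 0 else |a - b| ^ p := by
    intro v
    by_cases hv : v = L
    · simp only [hv, if_true]
      have : (univ.filter (fun w => L < w)) = (∅ : Finset (Fin n)) := by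
        ext w; simp only [mem_filter, mem_univ, true_and, Finset.notMem_empty, iff_false]
        intro hw
        have : w.val < n := w.isLt
        have : (L : Fin n).val < w.val := hw
        simp [hLdef] at this
        omega
      rw [this, Finset.sum_empty]
    · simp only [hv, if_false]
      have hsum : ∀ w ∈ univ.filter (fun w => v < w),
          |g v - g w| ^ p = if w = L then |a - b| ^ p else 0 := by
        intro w hw
        simp only [mem_filter, mem_univ, true_and] at hw
        have hgv : g v = a := by
          rw [hg v, if_neg]; intro h; exact hv ((hvL v).mp h)
        by_cases hwL : w = L
        · have hgw : g w = b := by rw [hg w, if_pos]; rw [hwL]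
          rw [if_pos hwL, hgv, hgw]
        · have hgw : g w = a := by
            rw [hg w, if_neg]; intro h; exact hwL ((hvL w).mp h)
          rw [if_neg hwL, hgv, hgw, sub_self, abs_zero, Real.zero_rpow hp.ne']
      rw [Finset.sum_congr rfl hsum, Finset.sum_ite_eq' _ L, if_pos]
      simp only [mem_filter, mem_univ, true_and]
      have h1 : v.val < n - 1 := by
        have := v.isLt
        have h2 : v.val ≠ n - 1 := fun h => hv ((hvL v).mp h)
        omega
      exact h1
  rw [Finset.sum_congr rfl fun v _ => key v]
  congr 1
  rw [Finset.sum_ite, Finset.sum_const, Finset.sum_const, smul_zero, zero_add,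
    nsmul_eq_mul]
  congr 1
  have heq : (univ.filter (fun v : Fin n => ¬ v = L)) = univ \ {L} := by
    ext v; simp [Finset.mem_sdiff]
  rw [heq, Finset.card_sdiff_of_subset (by simp), Finset.card_singleton, Finset.card_univ,
    Fintype.card_fin]
  have h1n : 1 ≤ n := by omega
  push_cast [Nat.cast_sub h1n]
  ring

theorem stmt16 (n : ℕ) (hn : 3 ≤ n)
    (f : Fin n → ℝ) (hf : f = fun i => if i.val = n - 1 then (1 : ℝ) else 0) :
    (∀ i : Fin n, i.val < n - 1 → maxOpKn n f i = 1 / n)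
      ∧ (∀ i : Fin n, i.val = n - 1 → maxOpKn n f i = 1)
      ∧ ∀ p : ℝ, 0 < p →
          varpKn n p (maxOpKn n f) = (1 - 1 / (n : ℝ)) * varpKn n p f := by
  have hL : n - 1 < n := by omega
  set L : Fin n := ⟨n - 1, hL⟩ with hLdef
  have hn0 : (0 : ℝ) < n := by positivity
  have hn1 : (1 : ℝ) ≤ n := by exact_mod_cast by omega
  have hvL : ∀ v : Fin n, v.val = n - 1 ↔ v = L := by
    intro v; exact ⟨fun h => Fin.ext h, fun h => by rw [h]⟩
  have hsum : (∑ w : Fin n, |f w|) = 1 := by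
    rw [hf]
    have : ∀ w : Fin n, |if w.val = n - 1 then (1:ℝ) else 0|
        = if w = L then 1 else 0 := by
      intro w
      by_cases h : w = L
      · rw [if_pos ((hvL w).mpr h), if_pos h, abs_one]
      · rw [if_neg (fun hh => h ((hvL w).mp hh)), if_neg h, abs_zero]
    simp only [this]
    rw [Finset.sum_ite_eq' _ L]
    simp
  have h1 : ∀ i : Fin n, i.val < n - 1 → maxOpKn n f i = 1 / n := by
    intro i hi
    unfold maxOpKn
    rw [hsum, hf]
    simp only [if_neg (by omega : ¬ i.val = n - 1), abs_zero]
    exact max_eq_right (by positivity)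
  have h2 : ∀ i : Fin n, i.val = n - 1 → maxOpKn n f i = 1 := by
    intro i hi
    unfold maxOpKn
    rw [hsum, hf]
    simp only [if_pos hi, abs_one]
    exact max_eq_left (by rw [div_le_one hn0]; exact hn1)
  refine ⟨h1, h2, fun p hp => ?_⟩
  have hvarf : varpKn n p f = (((n : ℝ) - 1) * |(0:ℝ) - 1| ^ p) ^ (1 / p) := by
    apply var_aux n hn p hp
    intro v
    rw [hf]
  have hvarM : varpKn n p (maxOpKn n f)
      = (((n : ℝ) - 1) * |1 / (n:ℝ) - 1| ^ p) ^ (1 / p) := by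
    apply var_aux n hn p hp
    intro v
    by_cases h : v.val = n - 1
    · rw [if_pos h]; exact h2 v h
    · rw [if_neg h]; exact h1 v (by have := v.isLt; omega)
  rw [hvarf, hvarM]
  have habs0 : |(0:ℝ) - 1| = 1 := by norm_num
  have habs1 : |1 / (n:ℝ) - 1| = ((n:ℝ) - 1) / n := by
    rw [abs_of_nonpos (by rw [sub_nonpos, div_le_one hn0]; exact hn1)]
    field_simp
    ring
  rw [habs0, habs1, Real.one_rpow, mul_one]
  have hnn1 : (0:ℝ) ≤ (n:ℝ) - 1 := by linarith
  rw [Real.mul_rpow hnn1 (by positivity), ← Real.rpow_mul (by positivity),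
    mul_one_div_cancel hp.ne', Real.rpow_one]
  field_simp
end
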